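/- arXiv:1206.5365 — 14 statements merged into one kernel-verified Lean document; each statement's English description precedes it below -/
import Mathlib

section
/- For all positive integers a and b, the function x ↦ I_{a+1,b}(x) / I_{a,b}(x) is strictly monotonically increasing on the open interval (0,1). -/
/-- The regularized incomplete beta function with positive integer parameters `a`, `b`. -/
noncomputable def incBeta (a b : ℕ) (x : ℝ) : ℝ :=
  ∑ j ∈ Finset.Icc a (a + b - 1),
    (Nat.choose (a + b - 1) j : ℝ) * x ^ j * (1 - x) ^ (a + b - 1 - j)

lemma choose_mul_sub (n j : ℕ) : n.choose j * (n - j) = n * (n-1).choose j := by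
  rcases n with _ | m
  · simp
  · rcases Nat.lt_or_ge m j with h | h
    · have hz : (m + 1 - 1).choose j = 0 := Nat.choose_eq_zero_of_lt (by omega)
      rw [Nat.sub_eq_zero_of_le (by omega), hz, Nat.mul_zero, Nat.mul_zero]
    · have h1 := Nat.choose_mul_factorial_mul_factorial (show j ≤ m+1 by omega)
      have h2 := Nat.choose_mul_factorial_mul_factorial h
      have hfac : Nat.factorial (m + 1 - j) = (m+1-j) * Nat.factorial (m - j) := by
        have e : m + 1 - j = (m - j) + 1 := by omega
        rw [e, Nat.factorial_succ]
      have key : ((m+1).choose j * (m+1-j)) * (Nat.factorial j * Nat.factorial (m-j)) =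
          ((m+1) * m.choose j) * (Nat.factorial j * Nat.factorial (m-j)) := by
        calc ((m+1).choose j * (m+1-j)) * (Nat.factorial j * Nat.factorial (m-j))
            = (m+1).choose j * Nat.factorial j * ((m+1-j) * Nat.factorial (m-j)) := by ring
          _ = (m+1).choose j * Nat.factorial j * Nat.factorial (m+1-j) := by rw [hfac]
          _ = Nat.factorial (m+1) := h1
          _ = (m+1) * Nat.factorial m := Nat.factorial_succ m
          _ = (m+1) * (m.choose j * Nat.factorial j * Nat.factorial (m-j)) := by rw [h2]
          _ = ((m+1) * m.choose j) * (Nat.factorial j * Nat.factorial (m-j)) := by ring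
      have hpos : 0 < Nat.factorial j * Nat.factorial (m-j) :=
        Nat.mul_pos (Nat.factorial_pos j) (Nat.factorial_pos (m-j))
      simpa using Nat.eq_of_mul_eq_mul_right hpos key

lemma choose_mul_self (n j : ℕ) (hj : 1 ≤ j) : n.choose j * j = n * (n-1).choose (j-1) := by
  rcases n with _ | m
  · rcases j with _ | k
    · omega
    · simp [Nat.choose_eq_zero_of_lt (by omega : 0 < k + 1)]
  · rcases j with _ | k
    · omega
    · simpa [Nat.mul_comm] using (Nat.add_one_mul_choose_eq m k).symm

lemma incBeta_pos (a c : ℕ) {x : ℝ} (hx : x ∈ Set.Ioo (0:ℝ) 1) :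
    0 < incBeta a (c+1) x := by
  obtain ⟨hx0, hx1⟩ := hx
  have h1x : (0:ℝ) < 1 - x := by linarith
  have hn : a + (c+1) - 1 = a + c := by omega
  rw [incBeta, hn]
  apply Finset.sum_pos'
  · intro j hj
    positivity
  · refine ⟨a, Finset.mem_Icc.mpr ⟨le_refl a, by omega⟩, ?_⟩
    have : 0 < (a+c).choose a := Nat.choose_pos (by omega)
    positivity

lemma incBeta_hasDerivAt (a c : ℕ) (ha : 0 < a) (x : ℝ) :
    HasDerivAt (incBeta a (c+1))
      ((a * Nat.choose (a+c) a : ℕ) * (x ^ (a-1) * (1-x)^c)) x := by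
  set n := a + c with hn
  have hn1 : 1 ≤ n := by omega
  set F : ℕ → ℝ := fun k => ((n * Nat.choose (n-1) k : ℕ) : ℝ) * (x^k * (1-x)^(n-1-k)) with hF
  have hsum : HasDerivAt (incBeta a (c+1)) (∑ j ∈ Finset.Icc a n, (F (j-1) - F j)) x := by
    have heq : incBeta a (c+1) = fun y : ℝ => ∑ j ∈ Finset.Icc a n,
        ((Nat.choose n j : ℝ) * y ^ j * (1 - y) ^ (n - j)) := by
      funext y
      simp only [incBeta]
      have e : a + (c + 1) - 1 = n := by omega
      rw [e]
    rw [heq]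
    apply HasDerivAt.fun_sum
    intro j hj
    simp only [Finset.mem_Icc] at hj
    obtain ⟨hja, hjn⟩ := hj
    have hj1 : 1 ≤ j := le_trans ha hja
    have h1 : HasDerivAt (fun y : ℝ => y ^ j) ((j:ℝ) * x ^ (j-1)) x := hasDerivAt_pow j x
    have h1x : HasDerivAt (fun y : ℝ => 1 - y) (-1) x := by
      simpa using (hasDerivAt_id x).const_sub 1
    have h2 : HasDerivAt (fun y : ℝ => (1 - y) ^ (n - j))
        (((n - j : ℕ):ℝ) * (1-x) ^ (n - j - 1) * (-1)) x :=
      (hasDerivAt_pow (n-j) (1-x)).comp x h1x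
    have h3 := (h1.mul h2).const_mul ((Nat.choose n j : ℝ))
    convert h3 using 1
    · rfl
    · funext y; rw [Pi.mul_apply]; ring
    have idA : ((Nat.choose n j : ℕ):ℝ) * (j:ℝ) = ((n * Nat.choose (n-1) (j-1) : ℕ):ℝ) := by
      push_cast [← choose_mul_self n j hj1]
      ring
    have idB : ((Nat.choose n j : ℕ):ℝ) * ((n - j : ℕ):ℝ) = ((n * Nat.choose (n-1) j : ℕ):ℝ) := by
      push_cast [← choose_mul_sub n j, Nat.cast_sub hjn]
      ring
    simp only [hF]
    have e1 : n - 1 - (j-1) = n - j := by omega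
    have e2 : n - 1 - j = n - j - 1 := by omega
    rw [e1, e2, ← idA, ← idB]
    ring
  have htel : (∑ j ∈ Finset.Icc a n, (F (j-1) - F j)) = F (a-1) - F n := by
    have hIcc : Finset.Icc a n = Finset.Ico a (n+1) := by rw [Finset.Ico_add_one_right_eq_Icc]
    rw [hIcc, Finset.sum_Ico_eq_sum_range]
    have hstep : ∀ i, F (a + i - 1) - F (a + i) =
        (fun k => F (a - 1 + k)) i - (fun k => F (a-1+k)) (i+1) := by
      intro i
      have e1 : a + i - 1 = a - 1 + i := by omega
      have e2 : a + i = a - 1 + (i+1) := by omega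
      rw [e1, e2]
    simp only [hstep]
    rw [Finset.sum_range_sub']
    have e0 : a - 1 + 0 = a - 1 := by omega
    have e3 : a - 1 + (n + 1 - a) = n := by omega
    rw [e0, e3]
  have hFn : F n = 0 := by
    simp only [hF]
    rw [Nat.choose_eq_zero_of_lt (by omega : n - 1 < n)]
    simp
  have hFa : F (a-1) = ((a * Nat.choose (a+c) a : ℕ) : ℝ) * (x ^ (a-1) * (1-x)^c) := by
    simp only [hF]
    have e1 : n - 1 - (a - 1) = c := by omega
    rw [e1]
    congr 2
    rw [← choose_mul_self n a ha, Nat.mul_comm]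
  rw [htel, hFn, sub_zero, hFa] at hsum
  exact hsum

lemma key_ineq (a c : ℕ) (ha : 0 < a) {x : ℝ} (hx : x ∈ Set.Ioo (0:ℝ) 1) :
    (a:ℝ) * incBeta (a+1) (c+1) x < ((a+c+1 : ℕ):ℝ) * x * incBeta a (c+1) x := by
  obtain ⟨hx0, hx1⟩ := hx
  have h1x : (0:ℝ) < 1 - x := by linarith
  have hL : incBeta (a+1) (c+1) x = ∑ j ∈ Finset.Icc a (a+c),
      ((Nat.choose (a+c+1) (j+1) : ℝ) * x ^ (j+1) * (1 - x) ^ (a+c-j)) := by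
    simp only [incBeta]
    have he : a + 1 + (c+1) - 1 = a + c + 1 := by omega
    rw [he]
    have hmap : Finset.Icc (a+1) (a+c+1) = (Finset.Icc a (a+c)).map (addRightEmbedding 1) := by
      rw [Finset.map_add_right_Icc]
    rw [hmap, Finset.sum_map]
    apply Finset.sum_congr rfl
    intro j hj
    simp only [Finset.mem_Icc] at hj
    simp only [addRightEmbedding_apply]
    have e1 : a + c + 1 - (j+1) = a + c - j := by omega
    rw [e1]
  have hR : ((a+c+1:ℕ):ℝ) * x * incBeta a (c+1) x = ∑ j ∈ Finset.Icc a (a+c),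
      (((a+c+1:ℕ):ℝ) * ((Nat.choose (a+c) j : ℝ) * x ^ (j+1) * (1 - x) ^ (a+c-j))) := by
    simp only [incBeta]
    have he : a + (c+1) - 1 = a + c := by omega
    rw [he, Finset.mul_sum]
    apply Finset.sum_congr rfl
    intro j hj
    ring
  rw [hL, hR, Finset.mul_sum]
  apply Finset.sum_lt_sum_of_nonempty
  · exact ⟨a, Finset.mem_Icc.mpr ⟨le_refl a, by omega⟩⟩
  · intro j hj
    simp only [Finset.mem_Icc] at hj
    obtain ⟨hja, hjn⟩ := hj
    have hnat := Nat.add_one_mul_choose_eq (a+c) j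
    have hid : ((a+c+1:ℕ):ℝ) * (Nat.choose (a+c) j : ℝ)
        = ((j+1:ℕ):ℝ) * (Nat.choose (a+c+1) (j+1) : ℝ) := by
      have hcast : (((a+c+1) * Nat.choose (a+c) j : ℕ):ℝ)
          = ((Nat.choose (a+c+1) (j+1) * (j+1) : ℕ):ℝ) := by exact_mod_cast hnat
      push_cast at hcast ⊢
      linear_combination hcast
    have hcp : 0 < ((a+c+1).choose (j+1) : ℝ) := by
      exact_mod_cast Nat.choose_pos (by omega : j + 1 ≤ a + c + 1)
    have hxp : 0 < x ^ (j+1) * (1-x)^(a+c-j) := by positivity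
    calc (a:ℝ) * ((Nat.choose (a+c+1) (j+1) : ℝ) * x ^ (j+1) * (1 - x) ^ (a+c-j))
        = ((a:ℝ) * (Nat.choose (a+c+1) (j+1) : ℝ)) * (x ^ (j+1) * (1 - x) ^ (a+c-j)) := by ring
      _ < (((j+1:ℕ):ℝ) * (Nat.choose (a+c+1) (j+1) : ℝ)) * (x ^ (j+1) * (1 - x) ^ (a+c-j)) := by
          apply mul_lt_mul_of_pos_right _ hxp
          apply mul_lt_mul_of_pos_right _ hcp
          exact_mod_cast (by omega : a < j + 1)
      _ = ((a+c+1:ℕ):ℝ) * ((Nat.choose (a+c) j : ℝ) * x ^ (j+1) * (1 - x) ^ (a+c-j)) := by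
          rw [← hid]; push_cast; ring

theorem incBeta_ratio_strictMonoOn (a b : ℕ) (ha : 0 < a) (hb : 0 < b) :
    StrictMonoOn (fun x : ℝ => incBeta (a + 1) b x / incBeta a b x) (Set.Ioo 0 1) := by
  obtain ⟨c, rfl⟩ : ∃ c, b = c + 1 := ⟨b - 1, by omega⟩
  have key : ∀ x ∈ Set.Ioo (0:ℝ) 1,
      HasDerivAt (fun x : ℝ => incBeta (a + 1) (c+1) x / incBeta a (c+1) x)
      (((((a+1) * Nat.choose (a+1+c) (a+1) : ℕ):ℝ) * (x ^ a * (1-x)^c) * incBeta a (c+1) x -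
        incBeta (a+1) (c+1) x * (((a * Nat.choose (a+c) a : ℕ):ℝ) * (x ^ (a-1) * (1-x)^c))) /
        (incBeta a (c+1) x)^2) x := by
    intro x hx
    have hN := incBeta_hasDerivAt (a+1) c (by omega) x
    have hD := incBeta_hasDerivAt a c ha x
    have hDpos := incBeta_pos a c hx
    have e : a + 1 - 1 = a := by omega
    rw [e] at hN
    exact hN.div hD hDpos.ne'
  have hpos : ∀ x ∈ Set.Ioo (0:ℝ) 1,
      0 < ((((a+1) * Nat.choose (a+1+c) (a+1) : ℕ):ℝ) * (x ^ a * (1-x)^c) * incBeta a (c+1) x -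
        incBeta (a+1) (c+1) x * (((a * Nat.choose (a+c) a : ℕ):ℝ) * (x ^ (a-1) * (1-x)^c))) /
        (incBeta a (c+1) x)^2 := by
    intro x hx
    obtain ⟨hx0, hx1⟩ := hx
    have h1x : (0:ℝ) < 1 - x := by linarith
    have hDpos := incBeta_pos a c ⟨hx0, hx1⟩
    apply div_pos _ (by positivity)
    have hnat := Nat.add_one_mul_choose_eq (a+c) a
    have hid : (((a+1) * Nat.choose (a+1+c) (a+1) : ℕ):ℝ)
        = ((a+c+1:ℕ):ℝ) * ((Nat.choose (a+c) a : ℕ):ℝ) := by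
      have e : a + 1 + c = a + c + 1 := by omega
      rw [e]
      have hcast : (((a+c+1) * Nat.choose (a+c) a : ℕ):ℝ)
          = ((Nat.choose (a+c+1) (a+1) * (a+1) : ℕ):ℝ) := by exact_mod_cast hnat
      push_cast at hcast ⊢
      linear_combination -hcast
    have hxa : x ^ a = x ^ (a-1) * x := by
      rw [← pow_succ]
      congr 1
      omega
    have hKey := key_ineq a c ha ⟨hx0, hx1⟩
    rw [hid, hxa]
    have expand : ((a+c+1:ℕ):ℝ) * ((Nat.choose (a+c) a : ℕ):ℝ) * (x ^ (a-1) * x * (1-x)^c) * incBeta a (c+1) x -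
        incBeta (a+1) (c+1) x * (((a * Nat.choose (a+c) a : ℕ):ℝ) * (x ^ (a-1) * (1-x)^c)) =
        ((Nat.choose (a+c) a : ℕ):ℝ) * (x ^ (a-1) * (1-x)^c) *
          (((a+c+1:ℕ):ℝ) * x * incBeta a (c+1) x - (a:ℝ) * incBeta (a+1) (c+1) x) := by
      push_cast
      ring
    rw [expand]
    have hcp : (0:ℝ) < ((Nat.choose (a+c) a : ℕ):ℝ) := by
      exact_mod_cast Nat.choose_pos (by omega : a ≤ a + c)
    apply mul_pos (by positivity)
    linarith
  apply strictMonoOn_of_deriv_pos (convex_Ioo 0 1)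
  · apply ContinuousOn.div
    · intro x hx
      exact ((incBeta_hasDerivAt (a+1) c (by omega) x).continuousAt).continuousWithinAt
    · intro x hx
      exact ((incBeta_hasDerivAt a c ha x).continuousAt).continuousWithinAt
    · intro x hx
      exact (incBeta_pos a c hx).ne'
  · intro x hx
    rw [interior_Ioo] at hx
    rw [(key x hx).deriv]
    exact hpos x hx
end

section
/- Let a, b be positive integers and η ∈ (0,1) satisfy (b−1)/(a+1) ≤ η/(1−η). Then for all x with 0 < x ≤ 1−η, I_{a+1,b}(x) / I_{a,b}(x) ≤ 1 − η/b, with equality when b = 1 and x = 1−η. -/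
noncomputable def ibTerm (a b' : ℕ) (x : ℝ) (i : ℕ) : ℝ :=
  ((a + b').choose (a + i) : ℝ) * x ^ (a + i) * (1 - x) ^ (b' - i)

lemma incBeta_eq_sum (a b' : ℕ) (x : ℝ) :
    incBeta a (b' + 1) x = ∑ i ∈ Finset.range (b' + 1), ibTerm a b' x i := by
  unfold incBeta ibTerm
  rw [show a + (b' + 1) - 1 = a + b' from by omega, ← Finset.Ico_add_one_right_eq_Icc,
    Finset.sum_Ico_eq_sum_range, show a + b' + 1 - a = b' + 1 from by omega]
  refine Finset.sum_congr rfl fun i _ => ?_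
  rw [show a + b' - (a + i) = b' - i from by omega]

lemma incBeta_succ_left (a b' : ℕ) (x : ℝ) :
    incBeta (a + 1) (b' + 1) x =
      incBeta a (b' + 1) x - (1 - x) * ibTerm a b' x 0 := by
  rw [incBeta_eq_sum, incBeta_eq_sum]
  have key : ∀ i ∈ Finset.range (b' + 1), ibTerm (a + 1) b' x i
      = x * ibTerm a b' x i
        + ((a + b').choose (a + i + 1) : ℝ) * x ^ (a + i + 1) * (1 - x) ^ (b' - i) := by
    intro i _
    unfold ibTerm
    rw [show a + 1 + b' = (a + b') + 1 from by omega,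
      show a + 1 + i = (a + i) + 1 from by omega, Nat.choose_succ_succ]
    push_cast
    ring
  rw [Finset.sum_congr rfl key, Finset.sum_add_distrib, ← Finset.mul_sum]
  have hB : ∑ i ∈ Finset.range (b' + 1),
      ((a + b').choose (a + i + 1) : ℝ) * x ^ (a + i + 1) * (1 - x) ^ (b' - i)
      = (1 - x) * (∑ i ∈ Finset.range (b' + 1), ibTerm a b' x i - ibTerm a b' x 0) := by
    rw [Finset.sum_range_succ, Finset.sum_range_succ' (f := fun i => ibTerm a b' x i)]
    have h0 : ((a + b').choose (a + b' + 1) : ℝ) = 0 := by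
      norm_cast
      exact Nat.choose_eq_zero_of_lt (by omega)
    rw [h0]
    have hterm : ∀ i ∈ Finset.range b',
        ((a + b').choose (a + i + 1) : ℝ) * x ^ (a + i + 1) * (1 - x) ^ (b' - i)
        = (1 - x) * ibTerm a b' x (i + 1) := by
      intro i hi
      simp only [Finset.mem_range] at hi
      unfold ibTerm
      rw [show a + (i + 1) = a + i + 1 from by omega,
        show b' - i = (b' - (i + 1)) + 1 from by omega, pow_succ]
      ring
    rw [Finset.sum_congr rfl hterm, ← Finset.mul_sum]
    ring
  rw [hB]
  ring

lemma ibTerm_succ_le (a b' i : ℕ) (x η : ℝ) (hi : i < b')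
    (hx0 : 0 ≤ x) (hx : x ≤ 1 - η) (hη0 : 0 < η)
    (hkey : (b' : ℝ) * (1 - η) ≤ η * ((a : ℝ) + 1)) :
    ibTerm a b' x (i + 1) ≤ ibTerm a b' x i := by
  unfold ibTerm
  have h1x : 0 < 1 - x := by linarith
  have hib : (i : ℝ) ≤ (b' : ℝ) := by exact_mod_cast hi.le
  have hch : ((a + b').choose (a + i + 1) : ℝ) * ((a : ℝ) + i + 1)
      = ((a + b').choose (a + i) : ℝ) * ((b' : ℝ) - i) := by
    have h := Nat.choose_succ_right_eq (a + b') (a + i)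
    have hsub : a + b' - (a + i) = b' - i := by omega
    rw [hsub] at h
    have := congrArg (fun n : ℕ => (n : ℝ)) h
    push_cast [Nat.cast_sub hi.le] at this
    convert this using 2 <;> push_cast <;> ring_nf
  -- main scalar inequality
  have hmain : ((a + b').choose (a + i + 1) : ℝ) * x ≤ ((a + b').choose (a + i) : ℝ) * (1 - x) := by
    have hpos : (0 : ℝ) < (a : ℝ) + i + 1 := by positivity
    rw [← mul_le_mul_iff_of_pos_right hpos]
    have hC0 : (0 : ℝ) ≤ ((a + b').choose (a + i) : ℝ) := by positivity
    calc ((a + b').choose (a + i + 1) : ℝ) * x * ((a : ℝ) + i + 1)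
        = ((a + b').choose (a + i) : ℝ) * (((b' : ℝ) - i) * x) := by
          nlinarith [hch]
      _ ≤ ((a + b').choose (a + i) : ℝ) * ((1 - x) * ((a : ℝ) + i + 1)) := by
          apply mul_le_mul_of_nonneg_left _ hC0
          have h1 : ((b' : ℝ) - i) * x ≤ (b' : ℝ) * (1 - η) := by
            have : ((b' : ℝ) - i) * x ≤ (b' : ℝ) * x := by
              apply mul_le_mul_of_nonneg_right _ hx0
              have : (0:ℝ) ≤ (i:ℝ) := by positivity
              linarith
            have h2 : (b' : ℝ) * x ≤ (b' : ℝ) * (1 - η) := by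
              apply mul_le_mul_of_nonneg_left hx (by positivity)
            linarith
          have h3 : η * ((a : ℝ) + 1) ≤ (1 - x) * ((a : ℝ) + i + 1) := by
            have hη1x : η ≤ 1 - x := by linarith
            have : (0:ℝ) ≤ (i:ℝ) := by positivity
            nlinarith
          linarith
      _ = ((a + b').choose (a + i) : ℝ) * (1 - x) * ((a : ℝ) + i + 1) := by ring
  have hrw1 : a + (i + 1) = (a + i) + 1 := by omega
  have hrw2 : b' - i = (b' - (i + 1)) + 1 := by omega
  rw [hrw1, hrw2, pow_succ, pow_succ]
  have hnn : (0 : ℝ) ≤ x ^ (a + i) * (1 - x) ^ (b' - (i + 1)) := by positivity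
  calc ((a + b').choose (a + i + 1) : ℝ) * (x ^ (a + i) * x) * (1 - x) ^ (b' - (i + 1))
      = (((a + b').choose (a + i + 1) : ℝ) * x) * (x ^ (a + i) * (1 - x) ^ (b' - (i + 1))) := by
        ring
    _ ≤ (((a + b').choose (a + i) : ℝ) * (1 - x)) * (x ^ (a + i) * (1 - x) ^ (b' - (i + 1))) := by
        exact mul_le_mul_of_nonneg_right hmain hnn
    _ = ((a + b').choose (a + i) : ℝ) * x ^ (a + i) * ((1 - x) ^ (b' - (i + 1)) * (1 - x)) := by
        ring

theorem incBeta_ratio_le (a b : ℕ) (ha : 0 < a) (hb : 0 < b)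
    (η : ℝ) (hη0 : 0 < η) (hη1 : η < 1)
    (hcond : ((b : ℝ) - 1) / ((a : ℝ) + 1) ≤ η / (1 - η)) :
    (∀ x : ℝ, 0 < x → x ≤ 1 - η →
      incBeta (a + 1) b x / incBeta a b x ≤ 1 - η / (b : ℝ)) ∧
    (b = 1 → incBeta (a + 1) b (1 - η) / incBeta a b (1 - η) = 1 - η / (b : ℝ)) := by
  obtain ⟨b', rfl⟩ : ∃ b', b = b' + 1 := ⟨b - 1, (Nat.succ_pred_eq_of_pos hb).symm⟩
  have hkey : (b' : ℝ) * (1 - η) ≤ η * ((a : ℝ) + 1) := by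
    rw [div_le_div_iff₀ (by positivity) (by linarith)] at hcond
    push_cast at hcond ⊢
    nlinarith
  constructor
  · intro x hx0 hx1
    have hx0' : (0 : ℝ) ≤ x := hx0.le
    have h1x : 0 < 1 - x := by linarith
    set S : ℝ := ∑ i ∈ Finset.range (b' + 1), ibTerm a b' x i with hS
    have hT0pos : 0 < ibTerm a b' x 0 := by
      unfold ibTerm
      have : 0 < (a + b').choose (a + 0) := Nat.choose_pos (by omega)
      positivity
    have hTnn : ∀ i, 0 ≤ ibTerm a b' x i := by
      intro i
      unfold ibTerm
      positivity
    have hTle : ∀ i, i ≤ b' → ibTerm a b' x i ≤ ibTerm a b' x 0 := by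
      intro i
      induction i with
      | zero => intro _; exact le_rfl
      | succ k ih =>
        intro hk
        have h1 : ibTerm a b' x (k + 1) ≤ ibTerm a b' x k :=
          ibTerm_succ_le a b' k x η (by omega) hx0' hx1 hη0 hkey
        exact h1.trans (ih (by omega))
    have hSpos : 0 < S := by
      rw [hS]
      have : ibTerm a b' x 0 ≤ S := by
        rw [hS]
        exact Finset.single_le_sum (fun i _ => hTnn i) (Finset.mem_range.mpr (by omega))
      linarith [this]
    have hSle : S ≤ ((b' : ℝ) + 1) * ibTerm a b' x 0 := by
      rw [hS]
      calc ∑ i ∈ Finset.range (b' + 1), ibTerm a b' x i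
          ≤ ∑ i ∈ Finset.range (b' + 1), ibTerm a b' x 0 :=
            Finset.sum_le_sum fun i hi => hTle i (by simpa using Nat.lt_succ_iff.mp (Finset.mem_range.mp hi))
        _ = ((b' : ℝ) + 1) * ibTerm a b' x 0 := by
            rw [Finset.sum_const, Finset.card_range]
            push_cast
            ring
    rw [incBeta_succ_left, incBeta_eq_sum, ← hS]
    rw [div_le_iff₀ hSpos]
    have hB : (0 : ℝ) < ((b' : ℕ) : ℝ) + 1 := by positivity
    have hcast : (((b' + 1 : ℕ) : ℝ)) = (b' : ℝ) + 1 := by push_cast; ring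
    rw [hcast]
    have hfrac : η / ((b' : ℝ) + 1) * S ≤ (1 - x) * ibTerm a b' x 0 := by
      rw [div_mul_eq_mul_div, div_le_iff₀ hB]
      have h1 : η * S ≤ η * (((b' : ℝ) + 1) * ibTerm a b' x 0) :=
        mul_le_mul_of_nonneg_left hSle hη0.le
      have h2 : η * (((b' : ℝ) + 1) * ibTerm a b' x 0)
          ≤ (1 - x) * (((b' : ℝ) + 1) * ibTerm a b' x 0) := by
        apply mul_le_mul_of_nonneg_right (by linarith)
        positivity
      nlinarith
    nlinarith
  · intro hb1
    have hb0 : b' = 0 := by omega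
    subst hb0
    have h1 : incBeta a 1 (1 - η) = (1 - η) ^ a := by
      rw [incBeta_eq_sum]
      simp [ibTerm]
    have h2 : incBeta (a + 1) 1 (1 - η) = (1 - η) ^ (a + 1) := by
      rw [incBeta_eq_sum]
      simp [ibTerm]
    rw [h1, h2, pow_succ]
    have hne : (1 - η) ^ a ≠ 0 := pow_ne_zero _ (by linarith)
    rw [mul_comm, mul_div_assoc, div_self hne]
    norm_num
end

section
/- For all integers m and n with m ≥ n ≥ 0, ∑_{j=0}^{n} (−1)^{j−n} · C(j+m, n) · C(n, j) = 1. -/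
open Finset

lemma alt_sum_choose_real (N : ℕ) :
    ∑ i ∈ range (N + 1), (-1 : ℝ) ^ i * (N.choose i : ℝ) = if N = 0 then 1 else 0 := by
  have h := Int.alternating_sum_range_choose (n := N)
  have : ((∑ i ∈ range (N + 1), ((-1) ^ i * N.choose i : ℤ) : ℤ) : ℝ)
      = ((if N = 0 then 1 else 0 : ℤ) : ℝ) := congrArg (Int.cast : ℤ → ℝ) h
  push_cast at this
  split_ifs with hN <;> simp_all

lemma aux_orth (n k : ℕ) (hk : k ≤ n) :
    ∑ j ∈ range (n + 1), (-1 : ℝ) ^ j * (n.choose j : ℝ) * (j.choose k : ℝ)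
      = (-1 : ℝ) ^ k * (n.choose k : ℝ) * (if k = n then 1 else 0) := by
  have hsplit : range (n + 1) = range k ∪ Ico k (n + 1) := by
    rw [range_eq_Ico, range_eq_Ico, Finset.Ico_union_Ico_eq_Ico (Nat.zero_le k) (by omega)]
  rw [hsplit, Finset.sum_union (by
    simp [Finset.disjoint_left]
    intro a ha h2; omega)]
  have h1 : ∑ j ∈ range k, (-1 : ℝ) ^ j * (n.choose j : ℝ) * (j.choose k : ℝ) = 0 := by
    apply Finset.sum_eq_zero
    intro j hj
    rw [Finset.mem_range] at hj
    rw [Nat.choose_eq_zero_of_lt hj]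
    simp
  rw [h1, zero_add, Finset.sum_Ico_eq_sum_range]
  have h2 : ∀ i ∈ range (n + 1 - k),
      (-1 : ℝ) ^ (k + i) * (n.choose (k + i) : ℝ) * ((k + i).choose k : ℝ)
        = ((-1 : ℝ) ^ k * (n.choose k : ℝ)) * ((-1 : ℝ) ^ i * ((n - k).choose i : ℝ)) := by
    intro i hi
    rw [Finset.mem_range] at hi
    have hle : k + i ≤ n := by omega
    have := Nat.choose_mul (n := n) (k := k + i) (s := k) (Nat.le_add_right _ _)
    have hcast : ((n.choose (k + i) * (k + i).choose k : ℕ) : ℝ)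
        = ((n.choose k * (n - k).choose (k + i - k) : ℕ) : ℝ) := congrArg (Nat.cast : ℕ → ℝ) this
    push_cast at hcast
    simp only [Nat.add_sub_cancel_left] at hcast
    rw [pow_add]
    linear_combination ((-1 : ℝ) ^ k * (-1 : ℝ) ^ i) * hcast
  rw [Finset.sum_congr rfl h2, ← Finset.mul_sum]
  have h3 : n + 1 - k = (n - k) + 1 := by omega
  rw [h3, alt_sum_choose_real (n - k)]
  have : (n - k = 0) ↔ (k = n) := by omega
  simp [this]

theorem alternating_binom_sum (m n : ℕ) (h : n ≤ m) :
    ∑ j ∈ Finset.range (n + 1),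
      (-1 : ℝ) ^ ((j : ℤ) - (n : ℤ)) * (Nat.choose (j + m) n : ℝ) * (Nat.choose n j : ℝ) = 1 := by
  have hz : ∀ j : ℕ, (-1 : ℝ) ^ ((j : ℤ) - (n : ℤ)) = (-1 : ℝ) ^ j * (-1 : ℝ) ^ n := by
    intro j
    rw [zpow_sub₀ (by norm_num : (-1 : ℝ) ≠ 0), zpow_natCast, zpow_natCast,
      div_eq_mul_inv, ← inv_pow]
    norm_num
  have hV : ∀ j : ℕ, ((j + m).choose n : ℝ)
      = ∑ k ∈ range (n + 1), (j.choose k : ℝ) * (m.choose (n - k) : ℝ) := by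
    intro j
    have := Nat.add_choose_eq j m n
    rw [Finset.Nat.sum_antidiagonal_eq_sum_range_succ_mk] at this
    exact_mod_cast congrArg (Nat.cast : ℕ → ℝ) this
  calc ∑ j ∈ Finset.range (n + 1),
      (-1 : ℝ) ^ ((j : ℤ) - (n : ℤ)) * (Nat.choose (j + m) n : ℝ) * (Nat.choose n j : ℝ)
      = ∑ j ∈ range (n + 1), ∑ k ∈ range (n + 1),
          (-1 : ℝ) ^ n * ((m.choose (n - k) : ℝ) *
            ((-1 : ℝ) ^ j * (n.choose j : ℝ) * (j.choose k : ℝ))) := by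
        apply Finset.sum_congr rfl
        intro j _
        rw [hz, hV, Finset.mul_sum, Finset.sum_mul]
        apply Finset.sum_congr rfl
        intro k _
        ring
    _ = (-1 : ℝ) ^ n * ∑ k ∈ range (n + 1), (m.choose (n - k) : ℝ) *
          ∑ j ∈ range (n + 1), (-1 : ℝ) ^ j * (n.choose j : ℝ) * (j.choose k : ℝ) := by
        rw [Finset.sum_comm, Finset.mul_sum]
        apply Finset.sum_congr rfl
        intro k _
        rw [Finset.mul_sum, Finset.mul_sum]
    _ = 1 := by
        have hterm : ∀ k ∈ range (n + 1), (m.choose (n - k) : ℝ) *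
            (∑ j ∈ range (n + 1), (-1 : ℝ) ^ j * (n.choose j : ℝ) * (j.choose k : ℝ))
            = if k = n then (-1 : ℝ) ^ n else 0 := by
          intro k hk
          rw [aux_orth n k (Nat.lt_succ_iff.mp (Finset.mem_range.mp hk))]
          split_ifs with hkn
          · subst hkn; simp
          · simp
        rw [Finset.sum_congr rfl hterm,
          Finset.sum_ite_eq' (range (n + 1)) n (fun _ => (-1 : ℝ) ^ n)]
        simp only [Finset.self_mem_range_succ, if_true]
        rw [← pow_add]
        exact Even.neg_one_pow ⟨n, rfl⟩
end

section
/- For every integer r ≥ 1 and every real x with 0 ≤ x < 1, the series ∑_{d=r+1}^{∞} (1/(d−1)) · I_{d−r,r}(x) converges and equals −ln(1−x). -/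
lemma incBeta_one (n : ℕ) (x : ℝ) : incBeta (n + 1) 1 x = x ^ (n + 1) := by
  simp [incBeta]

lemma incBeta_one_left (r : ℕ) (hr : 1 ≤ r) (x : ℝ) : incBeta 1 r x = 1 - (1 - x) ^ r := by
  have hins : Finset.range (r + 1) = insert 0 (Finset.Icc 1 r) := by
    ext j; simp; omega
  have h := add_pow x (1 - x) r
  rw [hins, Finset.sum_insert (by simp)] at h
  simp only [add_sub_cancel, one_pow, pow_zero, Nat.sub_zero, Nat.choose_zero_right,
    Nat.cast_one, one_mul, mul_one] at h
  have : incBeta 1 r x = ∑ j ∈ Finset.Icc 1 r, x ^ j * (1 - x) ^ (r - j) * (r.choose j : ℝ) := by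
    unfold incBeta
    simp only [show 1 + r - 1 = r by omega]
    apply Finset.sum_congr rfl; intro j hj; ring
  rw [this]; linarith [h]

lemma incBeta_succ (n r : ℕ) (hr : 1 ≤ r) (x : ℝ) :
    incBeta (n + 1) (r + 1) x =
      incBeta (n + 2) r x + ((n + r + 1).choose (n + 1) : ℝ) * x ^ (n + 1) * (1 - x) ^ r := by
  unfold incBeta
  have e1 : n + 1 + (r + 1) - 1 = n + r + 1 := by omega
  have e2 : n + 2 + r - 1 = n + r + 1 := by omega
  rw [e1, e2]
  have hins : Finset.Icc (n + 1) (n + r + 1) = insert (n + 1) (Finset.Icc (n + 2) (n + r + 1)) := by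
    ext j; simp; omega
  rw [hins, Finset.sum_insert (by simp)]
  rw [show n + r + 1 - (n + 1) = r by omega]
  ring

lemma negBinom (r : ℕ) (hr : 1 ≤ r) (x : ℝ) (hx0 : 0 ≤ x) (hx1 : x < 1) :
    HasSum (fun n : ℕ => ((n + r).choose (r - 1) : ℝ) * x ^ (n + 1))
      (1 / (1 - x) ^ r - 1) := by
  have hx : ‖x‖ < 1 := by rw [Real.norm_eq_abs, abs_of_nonneg hx0]; exact hx1
  have h := hasSum_choose_mul_geometric_of_norm_lt_one (𝕜 := ℝ) (r - 1) hx
  rw [show r - 1 + 1 = r by omega] at h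
  have h2 := (hasSum_nat_add_iff' 1).2 h
  simp only [Finset.range_one, Finset.sum_singleton] at h2
  have e : (fun n : ℕ => ((n + 1 + (r - 1)).choose (r - 1) : ℝ) * x ^ (n + 1))
      = fun n : ℕ => ((n + r).choose (r - 1) : ℝ) * x ^ (n + 1) := by
    funext n; rw [show n + 1 + (r - 1) = n + r by omega]
  rw [e] at h2
  simpa using h2

lemma choose_id (n r : ℕ) (hr : 1 ≤ r) :
    (r : ℝ) * ((n + r + 1).choose (n + 1) : ℝ) = ((n : ℝ) + r + 1) * ((n + r).choose (r - 1) : ℝ) := by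
  have h1 : (n + r + 1).choose (n + 1) = (n + r + 1).choose r := by
    rw [← Nat.choose_symm (by omega : r ≤ n + r + 1), show n + r + 1 - r = n + 1 by omega]
  have h2 := Nat.add_one_mul_choose_eq (n + r) (r - 1)
  simp only [Nat.succ_eq_add_one, show r - 1 + 1 = r from by omega] at h2
  rw [h1]
  have : ((n + r).succ : ℝ) * ((n + r).choose (r - 1) : ℝ) = ((n + r + 1).choose r : ℝ) * r := by
    exact_mod_cast congrArg (Nat.cast (R := ℝ)) h2
  push_cast at this ⊢
  linarith [this]


/-- The series `∑_{d=r+1}^∞ (1/(d-1)) I_{d-r,r}(x)` (reindexed by `d = n + r + 1`)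
converges to `-ln(1-x)` for `0 ≤ x < 1`. -/
theorem sum_incBeta_eq_neg_log (r : ℕ) (hr : 1 ≤ r) (x : ℝ) (hx0 : 0 ≤ x) (hx1 : x < 1) :
    HasSum (fun n : ℕ => (1 / ((n : ℝ) + (r : ℝ))) * incBeta (n + 1) r x)
      (- Real.log (1 - x)) := by
  induction r, hr using Nat.le_induction with
  | base =>
    have h := Real.hasSum_pow_div_log_of_abs_lt_one
      (x := x) (by rw [abs_of_nonneg hx0]; exact hx1)
    convert h using 2 with n
    rw [incBeta_one]
    push_cast
    ring
  | succ r hr ih =>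
    have hA := (hasSum_nat_add_iff' (f := fun n : ℕ =>
      (1 / ((n : ℝ) + (r : ℝ))) * incBeta (n + 1) r x) 1).2 ih
    simp only [Finset.range_one, Finset.sum_singleton] at hA
    have hB := (negBinom r hr x hx0 hx1).mul_left ((1 / r) * (1 - x) ^ r)
    have hsum := hA.add hB
    have hrne : (r : ℝ) ≠ 0 := Nat.cast_ne_zero.2 (by omega)
    have h1x : (1 - x) ^ r ≠ 0 := pow_ne_zero _ (by linarith)
    convert hsum using 1
    · rfl
    · funext n
      rw [incBeta_succ n r hr x]
      have hc := choose_id n r hr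
      have hne : ((n : ℝ) + r + 1) ≠ 0 := by positivity
      push_cast
      rw [mul_add]
      congr 1
      · ring
      · field_simp
        linear_combination (x ^ (n + 1)) * hc
    · rw [incBeta_one_left r hr x]
      field_simp
      ring
end

section
/- For all positive integers a and b and all real x, I_{a,b}(x) = b · C(a+b−1, b) · (−1)^a · ∑_{m=a}^{a+b−1} ((−x)^m / m) · C(b−1, m−a). -/
open Finset

private lemma alt_partial (n : ℕ) : ∀ k, ∑ j ∈ Finset.range (k+1), (-1:ℝ)^j * ((n+1).choose j : ℝ)
    = (-1)^k * (n.choose k : ℝ) := by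
  intro k
  induction k with
  | zero => simp
  | succ k ih =>
    rw [Finset.sum_range_succ, ih, Nat.choose_succ_succ']
    push_cast
    ring

private lemma nat_id (A B t : ℕ) (ht : t ≤ B) :
    (A+t+1) * Nat.choose (A+B+1) (A+t+1) * Nat.choose (A+t) A
      = (B+1) * Nat.choose (A+B+1) (B+1) * Nat.choose B t := by
  have h1 := Nat.add_one_mul_choose_eq (A+B) (A+t)
  have h2 := Nat.add_one_mul_choose_eq (A+B) B
  have h3 := Nat.choose_mul (n := A+B) (show A ≤ A+t by omega)
  simp only [Nat.add_sub_cancel_left] at h3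
  have h4 : Nat.choose (A+B) B = Nat.choose (A+B) A := (Nat.choose_symm_add).symm ▸ rfl
  have h1' : (A+B+1) * Nat.choose (A+B) (A+t) = Nat.choose (A+B+1) (A+t+1) * (A+t+1) := h1
  have h2' : (A+B+1) * Nat.choose (A+B) B = Nat.choose (A+B+1) (B+1) * (B+1) := h2
  calc (A+t+1) * Nat.choose (A+B+1) (A+t+1) * Nat.choose (A+t) A
      = (Nat.choose (A+B+1) (A+t+1) * (A+t+1)) * Nat.choose (A+t) A := by ring
    _ = ((A+B+1) * Nat.choose (A+B) (A+t)) * Nat.choose (A+t) A := by rw [← h1']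
    _ = (A+B+1) * (Nat.choose (A+B) (A+t) * Nat.choose (A+t) A) := by ring
    _ = (A+B+1) * (Nat.choose (A+B) A * Nat.choose B t) := by rw [h3]
    _ = ((A+B+1) * Nat.choose (A+B) B) * Nat.choose B t := by rw [h4]; ring
    _ = (Nat.choose (A+B+1) (B+1) * (B+1)) * Nat.choose B t := by rw [h2']
    _ = (B+1) * Nat.choose (A+B+1) (B+1) * Nat.choose B t := by ring

theorem incBeta_alt_form (a b : ℕ) (ha : 0 < a) (hb : 0 < b) (x : ℝ) :
    incBeta a b x =
      (b : ℝ) * (Nat.choose (a + b - 1) b : ℝ) * (-1 : ℝ) ^ a *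
        ∑ m ∈ Finset.Icc a (a + b - 1), ((-x) ^ m / (m : ℝ)) * (Nat.choose (b - 1) (m - a) : ℝ) := by
  obtain ⟨A, rfl⟩ : ∃ A, a = A + 1 := ⟨a - 1, by omega⟩
  obtain ⟨B, rfl⟩ : ∃ B, b = B + 1 := ⟨b - 1, by omega⟩
  set N := A + B + 1 with hN
  have hsub : A + 1 + (B + 1) - 1 = N := by omega
  have hsubb : B + 1 - 1 = B := by omega
  rw [incBeta, hsub, hsubb]
  -- Step A: expand (1-x)^(N-j) and reindex inner sum
  have stepA : ∀ j ∈ Finset.Icc (A+1) N,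
      (Nat.choose N j : ℝ) * x ^ j * (1 - x) ^ (N - j)
        = ∑ m ∈ Finset.Icc j N,
            (Nat.choose N j : ℝ) * (Nat.choose (N - j) (m - j) : ℝ) * x ^ j * (-x) ^ (m - j) := by
    intro j hj
    rw [Finset.mem_Icc] at hj
    have h1x : (1 - x) = (-x) + 1 := by ring
    rw [h1x, add_pow]
    rw [show Finset.Icc j N = Finset.Ico j (N+1) from (Finset.Ico_add_one_right_eq_Icc j N).symm,
      Finset.sum_Ico_eq_sum_range]
    rw [show N + 1 - j = N - j + 1 by omega]
    rw [Finset.mul_sum]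
    apply Finset.sum_congr rfl
    intro k _
    simp only [Nat.add_sub_cancel_left, one_pow]
    ring
  rw [Finset.sum_congr rfl stepA]
  -- Step B: swap the order of summation
  rw [Finset.sum_comm' (t' := Finset.Icc (A+1) N) (s' := fun m => Finset.Icc (A+1) m)
    (by intro j m; simp only [Finset.mem_Icc]; omega)]
  -- Step C: push constants into RHS sum
  rw [Finset.mul_sum]
  -- Step D: compare termwise
  apply Finset.sum_congr rfl
  intro m hm
  rw [Finset.mem_Icc] at hm
  obtain ⟨t, rfl⟩ : ∃ t, m = A + 1 + t := ⟨m - (A+1), by omega⟩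
  have ht : t ≤ B := by omega
  -- rewrite each term of the inner sum
  have inner : ∀ j ∈ Finset.Icc (A+1) (A+1+t),
      (Nat.choose N j : ℝ) * (Nat.choose (N - j) ((A+1+t) - j) : ℝ) * x ^ j * (-x) ^ ((A+1+t) - j)
        = (Nat.choose N (A+1+t) : ℝ) * (-x) ^ (A+1+t) * ((-1)^j * (Nat.choose (A+1+t) j : ℝ)) := by
    intro j hj
    rw [Finset.mem_Icc] at hj
    have hc : Nat.choose N (A+1+t) * Nat.choose (A+1+t) j
        = Nat.choose N j * Nat.choose (N - j) ((A+1+t) - j) :=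
      Nat.choose_mul hj.2
    have hc' : (Nat.choose N (A+1+t) : ℝ) * (Nat.choose (A+1+t) j : ℝ)
        = (Nat.choose N j : ℝ) * (Nat.choose (N - j) ((A+1+t) - j) : ℝ) := by exact_mod_cast hc
    have hx : x ^ j * (-x) ^ ((A+1+t) - j) = (-1)^j * (-x) ^ (A+1+t) := by
      have h5 : (-x) ^ (A+1+t) = (-x) ^ j * (-x) ^ ((A+1+t) - j) := by
        rw [← pow_add]; congr 1; omega
      rw [h5, ← mul_assoc, ← mul_pow]
      ring_nf
    calc (Nat.choose N j : ℝ) * (Nat.choose (N - j) ((A+1+t) - j) : ℝ) * x ^ j * (-x) ^ ((A+1+t) - j)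
        = ((Nat.choose N j : ℝ) * (Nat.choose (N - j) ((A+1+t) - j) : ℝ))
            * (x ^ j * (-x) ^ ((A+1+t) - j)) := by ring
      _ = ((Nat.choose N (A+1+t) : ℝ) * (Nat.choose (A+1+t) j : ℝ)) * ((-1)^j * (-x) ^ (A+1+t)) := by
          rw [hc', hx]
      _ = (Nat.choose N (A+1+t) : ℝ) * (-x) ^ (A+1+t) * ((-1)^j * (Nat.choose (A+1+t) j : ℝ)) := by
          ring
  rw [Finset.sum_congr rfl inner, ← Finset.mul_sum]
  -- compute the alternating sum
  have hsum : ∑ j ∈ Finset.Icc (A+1) (A+1+t), (-1:ℝ)^j * (Nat.choose (A+1+t) j : ℝ)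
      = (-1)^(A+1) * (Nat.choose (A+t) A : ℝ) := by
    have hsplit := Finset.sum_range_add_sum_Ico
      (fun j => (-1:ℝ)^j * (Nat.choose (A+1+t) j : ℝ)) (show A + 1 ≤ (A+1+t) + 1 by omega)
    have hfull : ∑ j ∈ Finset.range ((A+1+t)+1), (-1:ℝ)^j * (Nat.choose (A+1+t) j : ℝ) = 0 := by
      have h6 := alt_partial (A+t) (A+t+1)
      simpa [Nat.choose_succ_self, show A+1+t = A+t+1 by omega] using h6
    have hpart : ∑ j ∈ Finset.range (A+1), (-1:ℝ)^j * (Nat.choose (A+1+t) j : ℝ)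
        = (-1)^A * (Nat.choose (A+t) A : ℝ) := by
      have h7 := alt_partial (A+t) A
      simpa [show A+t+1 = A+1+t by omega] using h7
    rw [hfull, hpart] at hsplit
    rw [show Finset.Icc (A+1) (A+1+t) = Finset.Ico (A+1) ((A+1+t)+1) from
      (Finset.Ico_add_one_right_eq_Icc _ _).symm]
    have h8 : ∑ j ∈ Finset.Ico (A+1) ((A+1+t)+1), (-1:ℝ)^j * (Nat.choose (A+1+t) j : ℝ)
        = - ((-1)^A * (Nat.choose (A+t) A : ℝ)) := by linarith
    rw [h8]; ring
  rw [hsum]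
  -- final numeric identity
  have hid := nat_id A B t ht
  rw [show A+t+1 = A+1+t by omega] at hid
  have hid' : ((A+1+t : ℕ) : ℝ) * (Nat.choose N (A+1+t) : ℝ) * (Nat.choose (A+t) A : ℝ)
      = ((B+1 : ℕ) : ℝ) * (Nat.choose N (B+1) : ℝ) * (Nat.choose B t : ℝ) := by
    exact_mod_cast hid
  have hm0 : ((A+1+t : ℕ) : ℝ) ≠ 0 := by positivity
  rw [show (A+1+t) - (A+1) = t by omega]
  push_cast at hid' ⊢
  field_simp
  linear_combination ((-1:ℝ)^(A+1) * (-1:ℝ)^t * x^(A+1+t)) * hid'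
end

section
/- For all integers r ≥ 1 and m ≥ 1, ∑_{d=max(m,r)+1}^{m+r} (r/(d−1)) · C(d−1, r) · C(r−1, m−d+r) · (−1)^{m−d+r} = 1. -/
lemma aux_alt (s t : ℕ) :
    ∑ k ∈ Finset.range (s + 1),
      (-1 : ℤ) ^ k * (s.choose k) * ((s + t - k).choose s) = 1 := by
  induction s generalizing t with
  | zero => simp
  | succ s ih =>
    have hAB : ∑ k ∈ Finset.range (s + 1), (-1 : ℤ) ^ k * (s.choose k) *
          ((s + 1 + t - k).choose (s + 1)) -
        ∑ k ∈ Finset.range (s + 1), (-1 : ℤ) ^ k * (s.choose k) *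
          ((s + t - k).choose (s + 1)) = 1 := by
      rw [← Finset.sum_sub_distrib]
      have : ∀ k ∈ Finset.range (s+1),
          (-1 : ℤ) ^ k * (s.choose k) * ((s + 1 + t - k).choose (s + 1)) -
          (-1 : ℤ) ^ k * (s.choose k) * ((s + t - k).choose (s + 1)) =
          (-1 : ℤ) ^ k * (s.choose k) * ((s + t - k).choose s) := by
        intro k hk
        have hk' : k ≤ s := Nat.lt_succ_iff.mp (Finset.mem_range.mp hk)
        have h1 : s + 1 + t - k = (s + t - k) + 1 := by omega
        rw [h1, Nat.choose_succ_succ]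
        push_cast
        ring
      rw [Finset.sum_congr rfl this]
      exact ih t
    have hL : (∑ i ∈ Finset.range (s + 1),
          (-1 : ℤ) ^ i * (s.choose (i+1)) * ((s + t - i).choose (s+1))) +
        (∑ k ∈ Finset.range (s + 1), (-1 : ℤ) ^ k * (s.choose k) *
          ((s + 1 + t - k).choose (s + 1))) = ((s+1+t).choose (s+1) : ℤ) := by
      rw [Finset.sum_range_succ, Finset.sum_range_succ']
      have hzero : (∑ i ∈ Finset.range s,
            (-1 : ℤ) ^ i * (s.choose (i+1)) * ((s + t - i).choose (s+1))) +
          (∑ i ∈ Finset.range s, (-1 : ℤ) ^ (i+1) * (s.choose (i+1)) *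
            ((s + 1 + t - (i+1)).choose (s + 1))) = 0 := by
        rw [← Finset.sum_add_distrib]
        apply Finset.sum_eq_zero
        intro i hi
        have h1 : s + 1 + t - (i + 1) = s + t - i := by omega
        rw [h1]
        push_cast
        ring
      have hlast : ((s.choose (s+1) : ℤ)) = 0 := by
        norm_cast
        exact Nat.choose_eq_zero_of_lt (by omega)
      simp only [pow_zero, Nat.choose_zero_right, Nat.cast_one, one_mul, Nat.sub_zero]
      linarith [hzero, hlast,
        mul_eq_zero_of_left (mul_eq_zero_of_right ((-1:ℤ)^s) hlast) (((s+t-s).choose (s+1) : ℤ))]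
    rw [Finset.sum_range_succ']
    have step1 : ∀ i ∈ Finset.range (s + 1),
        (-1 : ℤ) ^ (i + 1) * ((s+1).choose (i+1)) * ((s + 1 + t - (i+1)).choose (s+1)) =
          -((-1 : ℤ) ^ i * (s.choose (i+1)) * ((s + t - i).choose (s+1)))
          - ((-1 : ℤ) ^ i * (s.choose i) * ((s + t - i).choose (s+1))) := by
      intro i hi
      have h1 : s + 1 + t - (i + 1) = s + t - i := by omega
      rw [h1, Nat.choose_succ_succ]
      push_cast
      ring
    rw [Finset.sum_congr rfl step1, Finset.sum_sub_distrib, Finset.sum_neg_distrib]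
    simp only [pow_zero, Nat.choose_zero_right, Nat.cast_one, one_mul, Nat.sub_zero]
    linarith [hAB, hL]

lemma aux_int (r m : ℕ) (hr : 1 ≤ r) (hm : 1 ≤ m) :
    ∑ d ∈ Finset.Icc (max m r + 1) (m + r),
      ((d-2).choose (r-1) : ℤ) * ((r-1).choose (m+r-d)) * (-1)^(m+r-d) = 1 := by
  have aux := aux_alt (r-1) (m-1)
  rw [show r - 1 + 1 = r by omega, ← Finset.sum_range_reflect] at aux
  rw [Finset.sum_subset (s₂ := Finset.Icc (m + 1) (m + r))
      (by intro d hd; simp only [Finset.mem_Icc] at hd ⊢; omega)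
      (by
        intro d hd hnd
        simp only [Finset.mem_Icc] at hd hnd
        have : d - 2 < r - 1 := by omega
        rw [Nat.choose_eq_zero_of_lt this]
        simp)]
  rw [← Finset.Ico_add_one_right_eq_Icc, Finset.sum_Ico_eq_sum_range]
  rw [show m + r + 1 - (m + 1) = r by omega]
  have heq : ∀ j ∈ Finset.range r,
      ((m + 1 + j - 2).choose (r-1) : ℤ) * ((r-1).choose (m + r - (m + 1 + j))) *
        (-1)^(m + r - (m + 1 + j)) =
      (-1 : ℤ) ^ (r - 1 - j) * ((r - 1).choose (r - 1 - j)) *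
        ((r - 1 + (m - 1) - (r - 1 - j)).choose (r - 1)) := by
    intro j hj
    have hjr : j < r := Finset.mem_range.mp hj
    rw [show m + 1 + j - 2 = r - 1 + (m - 1) - (r - 1 - j) by omega,
        show m + r - (m + 1 + j) = r - 1 - j by omega]
    ring
  rw [Finset.sum_congr rfl heq]
  exact aux

theorem binom_sum_Am_eq_one (r m : ℕ) (hr : 1 ≤ r) (hm : 1 ≤ m) :
    ∑ d ∈ Finset.Icc (max m r + 1) (m + r),
      ((r : ℝ) / ((d : ℝ) - 1)) * (Nat.choose (d - 1) r : ℝ) *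
        (Nat.choose (r - 1) (m + r - d) : ℝ) * (-1 : ℝ) ^ (m + r - d) = 1 := by
  have hint := aux_int r m hr hm
  have heq : ∀ d ∈ Finset.Icc (max m r + 1) (m + r),
      ((r : ℝ) / ((d : ℝ) - 1)) * (Nat.choose (d - 1) r : ℝ) *
        (Nat.choose (r - 1) (m + r - d) : ℝ) * (-1 : ℝ) ^ (m + r - d) =
      (((((d-2).choose (r-1) : ℤ) * ((r-1).choose (m+r-d)) * (-1)^(m+r-d)) : ℤ) : ℝ) := by
    intro d hd
    simp only [Finset.mem_Icc] at hd
    have hd2 : 2 ≤ d := by omega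
    have hne : (d : ℝ) - 1 ≠ 0 := by
      have h1 : (1:ℝ) < (d:ℝ) := by exact_mod_cast (by omega : 1 < d)
      linarith
    have hnat : (d - 1) * ((d-2).choose (r-1)) = ((d-1).choose r) * r := by
      have h := Nat.add_one_mul_choose_eq (d-2) (r-1)
      rwa [show d - 2 + 1 = d - 1 by omega, show r - 1 + 1 = r by omega] at h
    have hcast : ((d:ℝ) - 1) * (((d-2).choose (r-1) : ℕ) : ℝ) =
        (((d-1).choose r : ℕ) : ℝ) * r := by
      have h1 : ((d - 1 : ℕ) : ℝ) = (d : ℝ) - 1 := by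
        rw [Nat.cast_sub (by omega)]
        norm_num
      rw [← h1]
      exact_mod_cast hnat
    have key : (r:ℝ) / ((d:ℝ)-1) * (((d-1).choose r : ℕ) : ℝ) =
        (((d-2).choose (r-1) : ℕ) : ℝ) := by
      rw [div_mul_eq_mul_div, div_eq_iff hne]
      linarith [hcast]
    rw [key]
    push_cast
    ring
  rw [Finset.sum_congr rfl heq, ← Int.cast_sum, hint, Int.cast_one]
end

section
/- Let F be a finite field with q elements, let d, M, m be positive integers, let H be a fixed M×m matrix over F with rank(H) = k, and let G be chosen uniformly at random from all d×M matrices over F. Then for every integer r ≥ 0, the probability that rank(G·H) = r equals ζ^{d,k}_r = ζ^d_r · ζ^k_r / (ζ^r_r · q^{(d−r)(k−r)}). -/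
/-- `ζ^m_r = ∏_{i=0}^{r-1} (1 - q^{-m+i})`. -/
noncomputable def zetaC (q : ℝ) (m r : ℕ) : ℝ :=
  ∏ i ∈ Finset.range r, (1 - q ^ (-(m : ℤ) + (i : ℤ)))

open LinearMap Module Function

section Helpers

variable {F : Type*} [Field F] [Fintype F]

local notation "q" => Fintype.card F

/-- Injectivity of a linear map is equivalent to linear independence of the images of a basis. -/
lemma inj_iff_li_aux {V W : Type*} [AddCommGroup V] [Module F V] [AddCommGroup W] [Module F W]
    {ι : Type*} [Fintype ι] (b : Basis ι F V) (f : V →ₗ[F] W) :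
    Function.Injective f ↔ LinearIndependent F (f ∘ b) := by
  constructor
  · intro h
    exact b.linearIndependent.map' f (ker_eq_bot.mpr h)
  · intro h
    rw [← ker_eq_bot, eq_bot_iff]
    intro x hx
    have hx' : f x = 0 := hx
    have hrep : ∑ i, b.repr x i • b i = x := b.sum_repr x
    have h0 : ∑ i, b.repr x i • f (b i) = 0 := by
      rw [← hx']
      conv_rhs => rw [← hrep]
      simp only [map_sum, map_smul]
    have hz := (Fintype.linearIndependent_iff.mp h) (fun i => b.repr x i) (by simpa using h0)
    have : x = 0 := by
      rw [← hrep]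
      simp [hz]
    simp [this]

lemma card_inj_linmaps (D : Type*) [AddCommGroup D] [Module F D] [FiniteDimensional F D]
    (r : ℕ) :
    Nat.card {f : (Fin r → F) →ₗ[F] D // Function.Injective f}
      = ∏ i : Fin r, (q ^ (finrank F D) - q ^ (i : ℕ)) := by
  haveI : Finite D := Module.finite_of_finite F
  by_cases hr : r ≤ finrank F D
  · classical
    let b := Pi.basisFun F (Fin r)
    have hprop : ∀ v : Fin r → D,
        LinearIndependent F v ↔ Function.Injective (b.constr F v) := by
      intro v
      rw [inj_iff_li_aux b]
      have : (b.constr F v) ∘ b = v := by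
        funext i
        simp [b.constr_basis]
      rw [this]
    have e : {s : Fin r → D // LinearIndependent F s}
        ≃ {f : (Fin r → F) →ₗ[F] D // Function.Injective f} :=
      (b.constr F (M' := D)).toEquiv.subtypeEquiv hprop
    rw [← Nat.card_congr e, card_linearIndependent hr]
  · push_neg at hr
    have hempty : IsEmpty {f : (Fin r → F) →ₗ[F] D // Function.Injective f} := by
      constructor
      rintro ⟨f, hf⟩
      have := LinearMap.finrank_le_finrank_of_injective hf
      simp [Module.finrank_fintype_fun_eq_card] at this
      omega
    rw [Nat.card_of_isEmpty]
    refine (Finset.prod_eq_zero (Finset.mem_univ (⟨finrank F D, hr⟩ : Fin r)) ?_).symm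
    simp

lemma card_surj_linmaps (N : Type*) [AddCommGroup N] [Module F N] [FiniteDimensional F N]
    (r : ℕ) :
    Nat.card {g : N →ₗ[F] (Fin r → F) // Function.Surjective g}
      = ∏ i : Fin r, (q ^ (finrank F N) - q ^ (i : ℕ)) := by
  classical
  let b := Pi.basisFun F (Fin r)
  -- equivalence with injective maps into the dual
  let Φ : (N →ₗ[F] (Fin r → F)) ≃ ((Fin r → F) →ₗ[F] Module.Dual F N) :=
  { toFun := fun g => b.constr F (fun i => (b.coord i).comp g)
    invFun := fun f => LinearMap.pi (fun i => f (b i))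
    left_inv := by
      intro g
      ext x j
      simp [b.constr_basis, Basis.coord_apply, b, Pi.single_apply, ite_mul, Finset.sum_ite_eq']
    right_inv := by
      intro f
      refine b.ext fun i => ?_
      rw [b.constr_basis]
      ext x
      simp [Basis.coord_apply, b] }
  have hprop : ∀ g : N →ₗ[F] (Fin r → F),
      Function.Surjective g ↔ Function.Injective (Φ g) := by
    intro g
    rw [← LinearMap.dualMap_injective_iff]
    rw [inj_iff_li_aux b.dualBasis g.dualMap]
    have hΦ : Function.Injective (Φ g) ↔
        LinearIndependent F ((Φ g) ∘ b) := inj_iff_li_aux b (Φ g)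
    rw [hΦ]
    have h1 : (g.dualMap ∘ b.dualBasis) = fun i => (b.coord i).comp g := by
      funext i
      ext x
      simp [LinearMap.dualMap_apply, Basis.coe_dualBasis]
    have h2 : ((Φ g) ∘ b) = fun i => (b.coord i).comp g := by
      funext i
      simp [Φ, b.constr_basis]
    rw [h1, h2]
  have e : {g : N →ₗ[F] (Fin r → F) // Function.Surjective g}
      ≃ {f : (Fin r → F) →ₗ[F] Module.Dual F N // Function.Injective f} :=
    Φ.subtypeEquiv hprop
  rw [Nat.card_congr e, card_inj_linmaps, Subspace.dual_finrank_eq]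

lemma card_linequiv (r : ℕ) :
    Nat.card ((Fin r → F) ≃ₗ[F] (Fin r → F)) = ∏ i : Fin r, (q ^ r - q ^ (i : ℕ)) := by
  rw [← Matrix.card_GL_field]
  exact (Nat.card_congr ((Matrix.GeneralLinearGroup.toLin.trans
    (LinearMap.GeneralLinearGroup.generalLinearEquiv F (Fin r → F))).toEquiv)).symm

/-- The key counting lemma: number of linear maps of rank `r`. -/
lemma card_rank_eq_mul (N D : Type*) [AddCommGroup N] [Module F N] [FiniteDimensional F N]
    [AddCommGroup D] [Module F D] [FiniteDimensional F D] (r : ℕ) :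
    Nat.card {f : N →ₗ[F] D // finrank F (LinearMap.range f) = r}
        * ∏ i : Fin r, (q ^ r - q ^ (i : ℕ))
      = (∏ i : Fin r, (q ^ (finrank F D) - q ^ (i : ℕ)))
        * ∏ i : Fin r, (q ^ (finrank F N) - q ^ (i : ℕ)) := by
  classical
  rw [← card_linequiv, ← card_inj_linmaps D r, ← card_surj_linmaps N r,
    ← Nat.card_prod, ← Nat.card_prod]
  refine (Nat.card_congr ?_).symm
  -- from (Inj × Surj) to (RankR × Equivs)
  set Inj := {s : (Fin r → F) →ₗ[F] D // Function.Injective s}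
  set Surj := {g : N →ₗ[F] (Fin r → F) // Function.Surjective g}
  set RankR := {f : N →ₗ[F] D // finrank F (LinearMap.range f) = r}
  let π : Inj × Surj → RankR := fun x =>
    ⟨x.1.1.comp x.2.1, by
      rw [LinearMap.range_comp, LinearMap.range_eq_top.mpr x.2.2, Submodule.map_top,
        LinearMap.finrank_range_of_inj x.1.2, Module.finrank_fintype_fun_eq_card,
        Fintype.card_fin]⟩
  have fiberEquiv : ∀ y : RankR, {x : Inj × Surj // π x = y}
      ≃ ((Fin r → F) ≃ₗ[F] (Fin r → F)) := by
    intro y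
    obtain ⟨f, hf⟩ := y
    -- a fixed factorization of f
    let e : LinearMap.range f ≃ₗ[F] (Fin r → F) :=
      ((Module.finBasis F (LinearMap.range f)).reindex (finCongr hf)).equivFun
    let s0 : (Fin r → F) →ₗ[F] D := (LinearMap.range f).subtype ∘ₗ e.symm.toLinearMap
    let g0 : N →ₗ[F] (Fin r → F) := e.toLinearMap ∘ₗ f.rangeRestrict
    have hs0 : Function.Injective s0 := by
      intro a b hab
      exact e.symm.injective (Subtype.ext_iff.mpr hab)
    have hg0 : Function.Surjective g0 := by
      intro z
      obtain ⟨w, hw⟩ := f.surjective_rangeRestrict (e.symm z)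
      exact ⟨w, by simp [g0, hw]⟩
    have hsg0 : s0 ∘ₗ g0 = f := by
      ext x
      simp [s0, g0]
    let Ψ : ((Fin r → F) ≃ₗ[F] (Fin r → F)) → {x : Inj × Surj // π x = ⟨f, hf⟩} :=
      fun u => ⟨(⟨s0 ∘ₗ u.symm.toLinearMap, by
          intro a b hab
          exact u.symm.injective (hs0 hab)⟩,
        ⟨u.toLinearMap ∘ₗ g0, u.surjective.comp hg0⟩), by
          apply Subtype.ext
          show (s0 ∘ₗ u.symm.toLinearMap) ∘ₗ (u.toLinearMap ∘ₗ g0) = f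
          rw [← hsg0]
          ext x
          simp⟩
    have hinj : Function.Injective Ψ := by
      intro u v huv
      have h1 : s0 ∘ₗ u.symm.toLinearMap = s0 ∘ₗ v.symm.toLinearMap := by
        have := congrArg (fun z => z.1.1.1) huv
        exact this
      have h2 : ∀ x, u.symm x = v.symm x := by
        intro x
        apply hs0
        exact DFunLike.congr_fun h1 x
      have h3 : u.symm = v.symm := LinearEquiv.ext h2
      rw [← u.symm_symm, ← v.symm_symm, h3]
    have hsurj : Function.Surjective Ψ := by
      rintro ⟨⟨⟨s, hs⟩, ⟨g, hg⟩⟩, hc⟩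
      have hcomp : s ∘ₗ g = f := congrArg Subtype.val hc
      have hrange : LinearMap.range s = LinearMap.range f := by
        rw [← hcomp, LinearMap.range_comp, LinearMap.range_eq_top.mpr hg, Submodule.map_top]
      let w : (Fin r → F) →ₗ[F] LinearMap.range f :=
        LinearMap.codRestrict (LinearMap.range f) s
          (fun c => hrange ▸ LinearMap.mem_range_self s c)
      have hwinj : Function.Injective w := by
        intro a b hab
        exact hs (Subtype.ext_iff.mp hab)
      have hwsurj : Function.Surjective w := by
        rintro ⟨z, hz⟩
        rw [← hrange] at hz
        obtain ⟨x, hx⟩ := hz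
        exact ⟨x, Subtype.ext hx⟩
      let w2 : (Fin r → F) ≃ₗ[F] LinearMap.range f :=
        LinearEquiv.ofBijective w ⟨hwinj, hwsurj⟩
      set u := (w2.trans e).symm with hu
      have hA' : ∀ y, s0 (u.symm y) = s y := by
        intro y
        show ((LinearMap.range f).subtype) (e.symm (e (w2 y))) = s y
        rw [LinearEquiv.symm_apply_apply]
        rfl
      refine ⟨u, ?_⟩
      apply Subtype.ext
      apply Prod.ext
      · apply Subtype.ext
        apply LinearMap.ext
        intro y
        exact hA' y
      · apply Subtype.ext
        apply LinearMap.ext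
        intro x
        apply hs
        show s (u (g0 x)) = s (g x)
        have e1 : s0 (g0 x) = f x := DFunLike.congr_fun hsg0 x
        have e2 : s (g x) = f x := DFunLike.congr_fun hcomp x
        rw [← hA' (u (g0 x)), u.symm_apply_apply, e1, e2]
    exact (Equiv.ofBijective Ψ ⟨hinj, hsurj⟩).symm
  exact ((Equiv.sigmaFiberEquiv π).symm.trans
    ((Equiv.sigmaCongrRight fiberEquiv).trans (Equiv.sigmaEquivProd _ _)))

lemma card_matrix_fin (a b : ℕ) :
    Nat.card (Matrix (Fin a) (Fin b) F) = q ^ (a * b) := by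
  rw [Nat.card_congr (Matrix.of (m := Fin a) (n := Fin b) (α := F)).symm,
    Nat.card_fun, Nat.card_fun]
  simp only [Nat.card_eq_fintype_card, Fintype.card_fin, Fintype.card_pi, Finset.prod_const, Finset.card_univ]
  rw [← pow_mul, Nat.mul_comm]

lemma card_linmaps (A B : Type*) [AddCommGroup A] [Module F A] [FiniteDimensional F A]
    [AddCommGroup B] [Module F B] [FiniteDimensional F B] :
    Nat.card (A →ₗ[F] B) = q ^ (finrank F A * finrank F B) := by
  classical
  rw [Nat.card_congr (LinearMap.toMatrix (Module.finBasis F A)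
    (Module.finBasis F B)).toEquiv, card_matrix_fin, mul_comm]

end Helpers

section Main

variable {F : Type*} [Field F] [Fintype F]

local notation "q" => Fintype.card F

lemma card_G_eq (d M : ℕ) (V : Submodule F (Fin M → F)) (r : ℕ) :
    ∃ w : ℕ, finrank F V + w = M ∧
      Nat.card {g : (Fin M → F) →ₗ[F] (Fin d → F) // finrank F (V.map g) = r}
        = Nat.card {a : ↥V →ₗ[F] (Fin d → F) // finrank F (LinearMap.range a) = r}
          * q ^ (w * d) := by
  classical
  obtain ⟨W, hW⟩ := Submodule.exists_isCompl V
  refine ⟨finrank F W, ?_, ?_⟩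
  · rw [Submodule.finrank_add_eq_of_isCompl hW, Module.finrank_fintype_fun_eq_card,
      Fintype.card_fin]
  · let P := Fin d → F
    let e2 : (↥V × ↥W) ≃ₗ[F] (Fin M → F) := Submodule.prodEquivOfIsCompl V W hW
    let E : ((↥V →ₗ[F] P) × (↥W →ₗ[F] P)) ≃ₗ[F] ((Fin M → F) →ₗ[F] P) :=
      (LinearMap.coprodEquiv F).trans (LinearEquiv.arrowCongr e2 (LinearEquiv.refl F P))
    have hprop : ∀ p : (↥V →ₗ[F] P) × (↥W →ₗ[F] P),
        finrank F (LinearMap.range p.1) = r ↔ finrank F (V.map (E p)) = r := by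
      intro p
      have hcomp : (E p) ∘ₗ V.subtype = p.1 := by
        apply LinearMap.ext
        intro v
        have hv : e2.symm (V.subtype v) = (v, 0) := by
          rw [LinearEquiv.symm_apply_eq]
          show (v : Fin M → F) = (v : Fin M → F) + ((0 : ↥W) : Fin M → F)
          simp
        show (LinearMap.coprod p.1 p.2) (e2.symm (V.subtype v)) = p.1 v
        rw [hv]
        simp
      have hmap : V.map (E p) = LinearMap.range p.1 := by
        rw [← hcomp, LinearMap.range_comp, Submodule.range_subtype]
      rw [hmap]
    have e : {g : (Fin M → F) →ₗ[F] P // finrank F (V.map g) = r}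
        ≃ {p : (↥V →ₗ[F] P) × (↥W →ₗ[F] P) // finrank F (LinearMap.range p.1) = r} :=
      (E.toEquiv.subtypeEquiv hprop).symm
    rw [Nat.card_congr e, Nat.card_congr (Equiv.prodSubtypeFstEquivSubtypeProd
      (p := fun a : ↥V →ₗ[F] P => finrank F (LinearMap.range a) = r)), Nat.card_prod,
      card_linmaps]
    congr 2
    rw [Module.finrank_fintype_fun_eq_card, Fintype.card_fin]

lemma zeta_eq_aux (hq1 : 1 < q) (m r : ℕ) :
    zetaC q m r = (((q : ℝ) ^ m)⁻¹) ^ r * ∏ i : Fin r, ((q:ℝ) ^ m - (q:ℝ) ^ (i : ℕ)) := by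
  have hq0 : (q : ℝ) ≠ 0 := by positivity
  have hqm : ((q:ℝ) ^ m) ≠ 0 := by positivity
  rw [zetaC, ← Fin.prod_univ_eq_prod_range (fun i => (1 - (q:ℝ) ^ (-(m : ℤ) + (i : ℤ)))) r,
    show (((q:ℝ)^m)⁻¹)^r = ∏ _i : Fin r, ((q:ℝ)^m)⁻¹ by
      rw [Finset.prod_const, Finset.card_univ, Fintype.card_fin],
    ← Finset.prod_mul_distrib]
  refine Finset.prod_congr rfl fun i _ => ?_
  have h1 : (q:ℝ) ^ (-(m : ℤ) + (i : ℤ)) = ((q:ℝ) ^ m)⁻¹ * (q:ℝ) ^ (i : ℕ) := by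
    rw [zpow_add₀ hq0, zpow_neg, zpow_natCast, zpow_natCast]
  rw [h1, mul_sub, inv_mul_cancel₀ hqm]

lemma zeta_zero (hq1 : 1 < q) {m r : ℕ} (h : m < r) : zetaC q m r = 0 := by
  rw [zetaC]
  refine Finset.prod_eq_zero (Finset.mem_range.mpr h) ?_
  simp

lemma final_algebra (a QA QB QC : ℝ) (ha : a ≠ 0) (hQC : QC ≠ 0) (d k r w M : ℕ)
    (hw : k + w = M) (P : ℝ) (hP : P * QC = QA * QB) :
    P * a ^ (w * d) / a ^ (d * M) =
      ((a ^ d)⁻¹ ^ r * QA) * ((a ^ k)⁻¹ ^ r * QB) /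
        (((a ^ r)⁻¹ ^ r * QC) * a ^ (((d : ℤ) - (r : ℤ)) * ((k : ℤ) - (r : ℤ)))) := by
  have hM : (M : ℤ) = (k : ℤ) + (w : ℤ) := by exact_mod_cast hw.symm
  have conv1 : ∀ m : ℕ, ((a ^ m)⁻¹) ^ r = a ^ (-((m : ℤ) * (r : ℤ))) := by
    intro m
    rw [← zpow_natCast a m, ← zpow_neg, ← zpow_natCast (a ^ (-(m:ℤ))) r, ← zpow_mul]
    congr 1
    ring
  have hPe : P = QA * QB / QC := by rw [eq_div_iff hQC]; exact hP
  rw [conv1 d, conv1 k, conv1 r, hPe, ← zpow_natCast a (w * d), ← zpow_natCast a (d * M)]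
  have hz : ∀ z : ℤ, a ^ z ≠ 0 := fun z => zpow_ne_zero z ha
  rw [div_mul_eq_mul_div, div_div, div_eq_div_iff (by positivity)
    (mul_ne_zero (mul_ne_zero (hz _) hQC) (hz _))]
  have hexp : a ^ (-((d:ℤ) * (r:ℤ))) * a ^ (-((k:ℤ) * (r:ℤ))) * a ^ ((d * M : ℕ) : ℤ)
      = a ^ ((w * d : ℕ) : ℤ) * (a ^ (-((r:ℤ) * (r:ℤ))) *
          a ^ (((d : ℤ) - (r : ℤ)) * ((k : ℤ) - (r : ℤ)))) := by
    rw [← zpow_add₀ ha, ← zpow_add₀ ha, ← zpow_add₀ ha, ← zpow_add₀ ha]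
    congr 1
    push_cast
    rw [hM]
    ring
  linear_combination (-(QA * QB * QC)) * hexp

end Main

/-- For a fixed `M × m` matrix `H` of rank `k` over a finite field `F` with `q` elements,
the probability (under the uniform distribution on `d × M` matrices `G` over `F`)
that `rank(G ⬝ H) = r` is `ζ^d_r ζ^k_r / (ζ^r_r q^{(d-r)(k-r)})`. -/
theorem rank_mul_uniform_prob (F : Type*) [Field F] [Fintype F] (q : ℕ)
    (hq : Fintype.card F = q) (d M m : ℕ) (hd : 0 < d) (hM : 0 < M) (hm : 0 < m)
    (H : Matrix (Fin M) (Fin m) F) (k : ℕ) (hH : H.rank = k) (r : ℕ) :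
    (Nat.card {G : Matrix (Fin d) (Fin M) F // (G * H).rank = r} : ℝ) /
      (Nat.card (Matrix (Fin d) (Fin M) F) : ℝ) =
    zetaC q d r * zetaC q k r /
      (zetaC q r r * (q : ℝ) ^ (((d : ℤ) - (r : ℤ)) * ((k : ℤ) - (r : ℤ)))) := by
  subst hq
  classical
  have hq1 : 1 < Fintype.card F := Fintype.one_lt_card
  set V : Submodule F (Fin M → F) := LinearMap.range H.mulVecLin with hVdef
  have hV : finrank F V = k := hH
  have e1 : {G : Matrix (Fin d) (Fin M) F // (G * H).rank = r}
      ≃ {g : (Fin M → F) →ₗ[F] (Fin d → F) // finrank F (V.map g) = r} := by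
    refine Matrix.toLin'.toEquiv.subtypeEquiv fun G => ?_
    have htl : Matrix.toLin' G = G.mulVecLin := by
      ext x
      simp [Matrix.toLin'_apply]
    have h1 : (G * H).rank = finrank F (Submodule.map (Matrix.toLin' G) V) := by
      rw [htl]
      show finrank F (LinearMap.range (G * H).mulVecLin) = finrank F (V.map G.mulVecLin)
      rw [Matrix.mulVecLin_mul, LinearMap.range_comp]
    rw [h1]
    exact Iff.rfl
  obtain ⟨w, hw, hcard⟩ := card_G_eq d M V r
  rw [hV] at hw
  have hP := card_rank_eq_mul (F := F) (↥V) (Fin d → F) r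
  rw [Module.finrank_fintype_fun_eq_card, Fintype.card_fin, hV] at hP
  set P := Nat.card {a : ↥V →ₗ[F] (Fin d → F) // finrank F (LinearMap.range a) = r} with hPdef
  have hnum : Nat.card {G : Matrix (Fin d) (Fin M) F // (G * H).rank = r}
      = P * (Fintype.card F) ^ (w * d) := by
    rw [Nat.card_congr e1, hcard]
  have hden : Nat.card (Matrix (Fin d) (Fin M) F) = (Fintype.card F) ^ (d * M) :=
    card_matrix_fin d M
  by_cases hcase : r ≤ d ∧ r ≤ k
  · obtain ⟨hrd, hrk⟩ := hcase
    have hq0 : ((Fintype.card F : ℕ) : ℝ) ≠ 0 := by positivity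
    have cast_prod : ∀ mm : ℕ, r ≤ mm →
        ((∏ i : Fin r, ((Fintype.card F) ^ mm - (Fintype.card F) ^ (i : ℕ)) : ℕ) : ℝ)
          = ∏ i : Fin r, (((Fintype.card F) : ℝ) ^ mm - ((Fintype.card F) : ℝ) ^ (i : ℕ)) := by
      intro mm hmm
      rw [Nat.cast_prod]
      refine Finset.prod_congr rfl fun i _ => ?_
      have hle : (Fintype.card F) ^ (i : ℕ) ≤ (Fintype.card F) ^ mm :=
        Nat.pow_le_pow_right (le_of_lt hq1) (by omega)
      rw [Nat.cast_sub hle, Nat.cast_pow, Nat.cast_pow]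
    have hQC : (∏ i : Fin r, (((Fintype.card F) : ℝ) ^ r - ((Fintype.card F) : ℝ) ^ (i : ℕ)))
        ≠ 0 := by
      refine Finset.prod_ne_zero_iff.mpr fun i _ => ?_
      have : ((Fintype.card F) : ℝ) ^ (i : ℕ) < ((Fintype.card F) : ℝ) ^ r :=
        pow_lt_pow_right₀ (by exact_mod_cast hq1) i.isLt
      linarith
    have hPreal : (P : ℝ)
        * (∏ i : Fin r, (((Fintype.card F) : ℝ) ^ r - ((Fintype.card F) : ℝ) ^ (i : ℕ)))
        = (∏ i : Fin r, (((Fintype.card F) : ℝ) ^ d - ((Fintype.card F) : ℝ) ^ (i : ℕ)))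
          * (∏ i : Fin r, (((Fintype.card F) : ℝ) ^ k - ((Fintype.card F) : ℝ) ^ (i : ℕ))) := by
      have hc := congrArg (Nat.cast (R := ℝ)) hP
      rw [Nat.cast_mul, Nat.cast_mul, cast_prod r le_rfl, cast_prod d hrd, cast_prod k hrk] at hc
      exact hc
    rw [hnum, hden, zeta_eq_aux hq1 d r, zeta_eq_aux hq1 k r, zeta_eq_aux hq1 r r]
    push_cast
    exact final_algebra _ _ _ _ hq0 hQC d k r w M hw _ hPreal
  · have hPzero : P = 0 := by
      have hempty : IsEmpty {a : ↥V →ₗ[F] (Fin d → F) // finrank F (LinearMap.range a) = r} := by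
        constructor
        rintro ⟨a, ha⟩
        have h1 : finrank F (LinearMap.range a) ≤ k := hV ▸ LinearMap.finrank_range_le a
        have h2 : finrank F (LinearMap.range a) ≤ d := by
          have h3 := Submodule.finrank_le (LinearMap.range a)
          rwa [Module.finrank_fintype_fun_eq_card, Fintype.card_fin] at h3
        rw [ha] at h1 h2
        rcases not_and_or.mp hcase with h | h <;> omega
      rw [hPdef]
      exact Nat.card_of_isEmpty
    rw [hnum, hPzero]
    rcases not_and_or.mp hcase with h | h
    · push_neg at h
      rw [zeta_zero hq1 h]
      simp
    · push_neg at h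
      rw [zeta_zero hq1 h]
      simp
end

section
/- Let F be a finite field with q elements, let d ≥ 2, M, m be positive integers, let H be a fixed M×m matrix over F with rank(H) = k, let G be chosen uniformly at random from all d×M matrices over F, and let G′ be the (d−1)×M matrix consisting of the first d−1 rows of G. Then for every integer r with 0 ≤ r ≤ min(d−1, k), the conditional probability P(rank(G′·H) = r | rank(G·H) = r) equals (1 − q^{−d+r}) / (1 − q^{−d}). -/
open Submodule Module


section helpers

variable {F : Type*} [Field F]

/-- finrank of span of coerced tuple equals intrinsic finrank of span. -/
lemma finrank_span_coe {V : Type*} [AddCommGroup V] [Module F V] (W : Submodule F V)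
    {n : ℕ} (w : Fin n → W) :
    finrank F (span F (Set.range (fun i => (w i : V)))) = finrank F (span F (Set.range w)) := by
  have h : Set.range (fun i => (w i : V)) = W.subtype '' Set.range w := by
    rw [← Set.range_comp]; rfl
  rw [h, ← Submodule.map_span, Submodule.finrank_map_subtype_eq]

/-- Fiber counting along a linear map. -/
lemma card_comp_rangeRestrict {A B : Type*} [AddCommGroup A] [Module F A]
    [AddCommGroup B] [Module F B] [Finite A] [Finite B] (L : A →ₗ[F] B) (n : ℕ)
    (P : (Fin n → LinearMap.range L) → Prop) :
    Nat.card {g : Fin n → A // P (fun i => L.rangeRestrict (g i))} =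
      Nat.card {w : Fin n → LinearMap.range L // P w} * Nat.card (LinearMap.ker L) ^ n := by
  obtain ⟨σ, hσ⟩ := L.rangeRestrict.exists_rightInverse_of_surjective
    (LinearMap.range_eq_top.2 L.surjective_rangeRestrict)
  have hσ' : ∀ y, L.rangeRestrict (σ y) = y := fun y => DFunLike.congr_fun hσ y
  have hσB : ∀ y : LinearMap.range L, L (σ y) = (y : B) := fun y => congrArg Subtype.val (hσ' y)
  have key : ∀ (y : LinearMap.range L) (z : LinearMap.ker L),
      L.rangeRestrict (σ y + z) = y := by
    intro y z
    apply Subtype.ext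
    have hz : L (z : A) = 0 := z.2
    simp [hσB, hz]
  let e : {g : Fin n → A // P (fun i => L.rangeRestrict (g i))} ≃
      {w : Fin n → LinearMap.range L // P w} × (Fin n → LinearMap.ker L) :=
    { toFun := fun g => (⟨fun i => L.rangeRestrict (g.1 i), g.2⟩,
        fun i => ⟨g.1 i - σ (L.rangeRestrict (g.1 i)), by
          have : L (g.1 i - σ (L.rangeRestrict (g.1 i))) = 0 := by
            simp [map_sub, hσB]
          exact this⟩)
      invFun := fun p => ⟨fun i => σ (p.1.1 i) + (p.2 i : A), by
        have h : (fun i => L.rangeRestrict (σ (p.1.1 i) + (p.2 i : A))) = p.1.1 :=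
          funext fun i => key _ _
        rw [h]; exact p.1.2⟩
      left_inv := fun g => Subtype.ext (funext fun i => by simp)
      right_inv := fun p => by
        refine Prod.ext (Subtype.ext (funext fun i => key _ _)) (funext fun i => Subtype.ext ?_)
        simp only []
        rw [key]
        simp }
  rw [Nat.card_congr e, Nat.card_prod, Nat.card_fun, Nat.card_eq_fintype_card (α := Fin n),
    Fintype.card_fin]

end helpers

section helpers2
variable {F : Type*} [Field F]



/-- spanning tuples correspond to linearly independent transposed tuples -/
lemma span_top_iff_linearIndependent_swap [Fintype F] {n r : ℕ} (w : Fin n → Fin r → F) :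
    span F (Set.range w) = ⊤ ↔ LinearIndependent F (fun j i => w i j) := by
  have hrank : (Matrix.of w).rank = finrank F (span F (Set.range w)) :=
    Matrix.rank_eq_finrank_span_row _
  have hrankT : (Matrix.of w).transpose.rank = finrank F (span F (Set.range (fun j i => w i j))) :=
    Matrix.rank_eq_finrank_span_row _
  constructor
  · intro hspan
    rw [linearIndependent_iff_card_eq_finrank_span, Set.finrank, ← hrankT,
      Matrix.rank_transpose, hrank, hspan, finrank_top]
    simp
  · intro hli
    apply eq_top_of_finrank_eq
    have h := linearIndependent_iff_card_eq_finrank_span.mp hli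
    rw [Set.finrank] at h
    rw [← hrank, ← Matrix.rank_transpose, hrankT, ← h]
    simp

/-- number of spanning tuples of length n in F^r -/
lemma card_spanning [Fintype F] (n r : ℕ) (h : r ≤ n) :
    Nat.card {w : Fin n → Fin r → F // span F (Set.range w) = ⊤} =
      ∏ i : Fin r, (Fintype.card F ^ n - Fintype.card F ^ (i : ℕ)) := by
  have e : {w : Fin n → Fin r → F // span F (Set.range w) = ⊤} ≃
      {s : Fin r → Fin n → F // LinearIndependent F s} :=
    Equiv.subtypeEquiv (Equiv.piComm fun (_ : Fin n) (_ : Fin r) => F)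
      (fun w => span_top_iff_linearIndependent_swap w)
  rw [Nat.card_congr e, card_linearIndependent (by simpa using h)]
  simp

/-- transport spanning tuples along a linear equivalence -/
def spanningCongr {V₁ V₂ : Type*} [AddCommGroup V₁] [Module F V₁] [AddCommGroup V₂]
    [Module F V₂] (e : V₁ ≃ₗ[F] V₂) (n : ℕ) :
    {w : Fin n → V₁ // span F (Set.range w) = ⊤} ≃
      {w : Fin n → V₂ // span F (Set.range w) = ⊤} :=
  Equiv.subtypeEquiv (Equiv.arrowCongr (Equiv.refl _) e.toEquiv) (by
    intro w
    have h : span F (Set.range (fun i => e (w i))) =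
        Submodule.map (e : V₁ →ₗ[F] V₂) (span F (Set.range w)) := by
      rw [Submodule.map_span, ← Set.range_comp]; rfl
    constructor
    · intro hw
      have : (Equiv.arrowCongr (Equiv.refl (Fin n)) e.toEquiv) w = fun i => e (w i) := rfl
      rw [this, h, hw, Submodule.map_top, LinearEquiv.range]
    · intro hw
      have h2 : Submodule.map (e : V₁ →ₗ[F] V₂) (span F (Set.range w)) = ⊤ := by
        rw [← h]; exact hw
      have := congrArg (Submodule.map (e.symm : V₂ →ₗ[F] V₁)) h2
      rwa [Submodule.map_top, LinearEquiv.range, ← Submodule.map_comp,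
        LinearEquiv.comp_coe, LinearEquiv.self_trans_symm, LinearEquiv.refl_toLinearMap,
        Submodule.map_id] at this)

/-- tuples with span exactly S correspond to spanning tuples of S -/
def spanEqEquiv {V : Type*} [AddCommGroup V] [Module F V] (S : Submodule F V) (n : ℕ) :
    {w : Fin n → V // span F (Set.range w) = S} ≃
      {w : Fin n → S // span F (Set.range w) = ⊤} where
  toFun w := ⟨fun i => ⟨w.1 i, by
    have hm := subset_span (R := F) (Set.mem_range_self (f := w.1) i)
    rwa [w.2] at hm⟩, by
    apply Submodule.map_injective_of_injective S.injective_subtype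
    rw [Submodule.map_span, ← Set.range_comp, Submodule.map_subtype_top]
    exact w.2⟩
  invFun w := ⟨fun i => (w.1 i : V), by
    have h : Set.range (fun i => (w.1 i : V)) = S.subtype '' Set.range w.1 := by
      rw [← Set.range_comp]; rfl
    rw [h, ← Submodule.map_span, w.2, Submodule.map_subtype_top]⟩
  left_inv w := Subtype.ext rfl
  right_inv w := Subtype.ext (funext fun i => Subtype.ext rfl)

/-- counting tuples whose span has dimension r -/
lemma card_finrank_span {V : Type*} [AddCommGroup V] [Module F V] [Finite V] [Fintype F]
    (n r : ℕ) (hrn : r ≤ n) :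
    Nat.card {w : Fin n → V // finrank F (span F (Set.range w)) = r} =
      Nat.card {S : Submodule F V // finrank F S = r} *
        ∏ i : Fin r, (Fintype.card F ^ n - Fintype.card F ^ (i : ℕ)) := by
  classical
  have : Fintype V := Fintype.ofFinite V
  have hfin : Finite (Submodule F V) := Finite.of_injective _ SetLike.coe_injective
  have : Fintype (Submodule F V) := Fintype.ofFinite _
  have e : {w : Fin n → V // finrank F (span F (Set.range w)) = r} ≃
      Σ S : {S : Submodule F V // finrank F S = r}, {w : Fin n → V // span F (Set.range w) = S.1} :=
    { toFun := fun w => ⟨⟨span F (Set.range w.1), w.2⟩, ⟨w.1, rfl⟩⟩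
      invFun := fun p => ⟨p.2.1, by rw [p.2.2]; exact p.1.2⟩
      left_inv := fun w => rfl
      right_inv := fun p => by
        obtain ⟨⟨S, hS⟩, ⟨w, hw⟩⟩ := p
        have hw' : span F (Set.range w) = S := hw
        subst hw'
        rfl }
  rw [Nat.card_congr e, Nat.card_eq_fintype_card, Fintype.card_sigma]
  have hcard : ∀ S : {S : Submodule F V // finrank F S = r},
      Fintype.card {w : Fin n → V // span F (Set.range w) = S.1} =
        ∏ i : Fin r, (Fintype.card F ^ n - Fintype.card F ^ (i : ℕ)) := by
    intro S
    have : FiniteDimensional F S.1 := inferInstance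
    let b : Basis (Fin r) F S.1 := finBasisOfFinrankEq F S.1 S.2
    rw [← Nat.card_eq_fintype_card,
      Nat.card_congr ((spanEqEquiv S.1 n).trans (spanningCongr b.equivFun n)),
      card_spanning n r hrn]
  simp only [hcard, Finset.sum_const, Finset.card_univ, smul_eq_mul, Nat.card_eq_fintype_card]




lemma range_snoc' {α : Type*} {n : ℕ} (f : Fin n → α) (a : α) :
    Set.range (Fin.snoc f a : Fin (n + 1) → α) = insert a (Set.range f) := by
  ext v
  simp only [Set.mem_range, Set.mem_insert_iff]
  constructor
  · rintro ⟨i, rfl⟩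
    induction i using Fin.lastCases with
    | last => left; simp
    | cast j => right; exact ⟨j, by simp⟩
  · rintro (rfl | ⟨j, rfl⟩)
    · exact ⟨Fin.last n, by simp⟩
    · exact ⟨j.castSucc, by simp⟩

lemma card_joint {V : Type*} [AddCommGroup V] [Module F V] [Finite V] [Fintype F]
    (n r : ℕ) :
    Nat.card {w : Fin (n + 1) → V //
        finrank F (span F (Set.range (w ∘ Fin.castSucc))) = r ∧
        finrank F (span F (Set.range w)) = r} =
      Nat.card {w : Fin n → V // finrank F (span F (Set.range w)) = r} *
        Fintype.card F ^ r := by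
  classical
  have : Fintype V := Fintype.ofFinite V
  have e : {w : Fin (n + 1) → V //
        finrank F (span F (Set.range (w ∘ Fin.castSucc))) = r ∧
        finrank F (span F (Set.range w)) = r} ≃
      Σ w' : {w : Fin n → V // finrank F (span F (Set.range w)) = r},
        ↥(span F (Set.range w'.1)) :=
    { toFun := fun w => ⟨⟨w.1 ∘ Fin.castSucc, w.2.1⟩, ⟨w.1 (Fin.last n), by
        have hle : span F (Set.range (w.1 ∘ Fin.castSucc)) ≤ span F (Set.range w.1) :=
          span_mono (Set.range_comp_subset_range _ _)
        have heq : span F (Set.range (w.1 ∘ Fin.castSucc)) = span F (Set.range w.1) :=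
          Submodule.eq_of_le_of_finrank_eq hle (w.2.1.trans w.2.2.symm)
        rw [heq]
        exact subset_span (Set.mem_range_self _)⟩⟩
      invFun := fun p => ⟨Fin.snoc p.1.1 (p.2 : V), by
        constructor
        · rw [Fin.snoc_comp_castSucc]; exact p.1.2
        · have h : Set.range (Fin.snoc p.1.1 (p.2 : V) : Fin (n+1) → V) =
              insert (p.2 : V) (Set.range p.1.1) := range_snoc' _ _
          rw [h, span_insert_eq_span p.2.2]
          exact p.1.2⟩
      left_inv := fun w => Subtype.ext (Fin.snoc_init_self w.1)
      right_inv := fun p => by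
        obtain ⟨⟨w, hw⟩, x⟩ := p
        refine Sigma.ext (Subtype.ext (Fin.snoc_comp_castSucc)) ?_
        refine (Subtype.heq_iff_coe_eq ?_).2 ?_
        · intro v
          show v ∈ span F (Set.range (Fin.snoc w (x : V) ∘ Fin.castSucc)) ↔
            v ∈ span F (Set.range w)
          rw [Fin.snoc_comp_castSucc]
        · simp }
  rw [Nat.card_congr e, Nat.card_eq_fintype_card, Fintype.card_sigma]
  have hcard : ∀ w' : {w : Fin n → V // finrank F (span F (Set.range w)) = r},
      Fintype.card ↥(span F (Set.range w'.1)) = Fintype.card F ^ r := by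
    intro w'
    rw [card_eq_pow_finrank (K := F), w'.2]
  simp only [hcard, Finset.sum_const, Finset.card_univ, smul_eq_mul, Nat.card_eq_fintype_card]

lemma telescope (Q : ℝ) (n r : ℕ) :
    Q ^ r * (∏ i ∈ Finset.range r, (Q ^ n - Q ^ i)) * (Q ^ (n + 1) - 1) =
      (∏ i ∈ Finset.range r, (Q ^ (n + 1) - Q ^ i)) * (Q ^ (n + 1) - Q ^ r) := by
  induction r with
  | zero => simp
  | succ r ih =>
    rw [Finset.prod_range_succ, Finset.prod_range_succ]
    linear_combination (Q ^ (n + 1) - Q ^ (r + 1)) * ih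

end helpers2

section mainproof

set_option maxHeartbeats 2000000 in
/-- For a fixed `M × m` matrix `H` of rank `k` over a finite field `F` with `q` elements,
let `G` be uniform over `d × M` matrices and `G'` the matrix of its first `d-1` rows.
For `0 ≤ r ≤ min (d-1) k`, the conditional probability
`P(rank(G'H) = r | rank(GH) = r)` equals `(1 - q^{-d+r})/(1 - q^{-d})`. -/
theorem rank_delete_row_cond_prob (F : Type*) [Field F] [Fintype F] (q : ℕ)
    (hq : Fintype.card F = q) (d M m : ℕ) (hd : 2 ≤ d) (hM : 0 < M) (hm : 0 < m)
    (H : Matrix (Fin M) (Fin m) F) (k : ℕ) (hH : H.rank = k)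
    (r : ℕ) (hr : r ≤ min (d - 1) k) :
    (Nat.card {G : Matrix (Fin d) (Fin M) F //
        ((G.submatrix (Fin.castLE (Nat.sub_le d 1)) id) * H).rank = r ∧
        (G * H).rank = r} : ℝ) /
      (Nat.card {G : Matrix (Fin d) (Fin M) F // (G * H).rank = r} : ℝ) =
    (1 - (q : ℝ) ^ (-(d : ℤ) + (r : ℤ))) / (1 - (q : ℝ) ^ (-(d : ℤ))) := by
  subst hq
  obtain ⟨n, rfl⟩ : ∃ n, d = n + 1 := ⟨d - 1, by omega⟩
  have hrn : r ≤ n := by have := min_le_left ((n+1) - 1) k; omega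
  have hrk : r ≤ k := le_trans hr (min_le_right _ _)
  set L := H.vecMulLinear with hL
  set W := LinearMap.range L with hWdef
  have hW : finrank F W = k := by
    have h1 : H.transpose.rank = k := by rw [Matrix.rank_transpose, hH]
    rw [hWdef, hL, ← Matrix.mulVecLin_transpose]
    exact h1
  -- rank of G*H as finrank of span of images of rows
  have hrank : ∀ (j : ℕ) (G : Matrix (Fin j) (Fin M) F),
      (G * H).rank = finrank F (span F (Set.range
        (fun i => ((L.rangeRestrict (G i) : W) : Fin m → F)))) := by
    intro j G
    have hGH : G * H = (fun i => L (G i) : Matrix (Fin j) (Fin m) F) := by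
      ext i j'
      simp [hL, Matrix.vecMulLinear_apply, Matrix.vecMul, dotProduct, Matrix.mul_apply]
    rw [Matrix.rank_eq_finrank_span_row, hGH]
    rfl
  haveI : Finite (Submodule F ↥W) := Finite.of_injective _ SetLike.coe_injective
  -- denominator count
  have hden : Nat.card {G : Matrix (Fin (n+1)) (Fin M) F // (G * H).rank = r} =
      Nat.card {S : Submodule F ↥W // finrank F S = r} *
        (∏ i : Fin r, (Fintype.card F ^ (n+1) - Fintype.card F ^ (i : ℕ))) *
        Nat.card (LinearMap.ker L) ^ (n+1) := by
    have e1 : {G : Matrix (Fin (n+1)) (Fin M) F // (G * H).rank = r} ≃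
        {g : Fin (n+1) → (Fin M → F) //
          (fun w : Fin (n+1) → W =>
            finrank F (span F (Set.range (fun i => (w i : Fin m → F)))) = r)
          (fun i => L.rangeRestrict (g i))} :=
      Equiv.subtypeEquivRight (fun G => by rw [hrank (n+1) G])
    have e2 : {w : Fin (n+1) → W //
          finrank F (span F (Set.range (fun i => (w i : Fin m → F)))) = r} ≃
        {w : Fin (n+1) → W // finrank F (span F (Set.range w)) = r} :=
      Equiv.subtypeEquivRight (fun w => by rw [finrank_span_coe])
    calc Nat.card {G : Matrix (Fin (n+1)) (Fin M) F // (G * H).rank = r}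
        = Nat.card {g : Fin (n+1) → (Fin M → F) //
            (fun w : Fin (n+1) → W =>
              finrank F (span F (Set.range (fun i => (w i : Fin m → F)))) = r)
            (fun i => L.rangeRestrict (g i))} := Nat.card_congr e1
      _ = Nat.card {w : Fin (n+1) → W //
            finrank F (span F (Set.range (fun i => (w i : Fin m → F)))) = r} *
            Nat.card (LinearMap.ker L) ^ (n+1) :=
          card_comp_rangeRestrict L (n+1) (fun w : Fin (n+1) → W =>
            finrank F (span F (Set.range (fun i => (w i : Fin m → F)))) = r)
      _ = Nat.card {w : Fin (n+1) → W // finrank F (span F (Set.range w)) = r} *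
            Nat.card (LinearMap.ker L) ^ (n+1) := by rw [Nat.card_congr e2]
      _ = _ := by rw [card_finrank_span (n+1) r (by omega)]
  -- numerator count
  have hnum : Nat.card {G : Matrix (Fin (n+1)) (Fin M) F //
        ((G.submatrix (Fin.castLE (Nat.sub_le (n+1) 1)) id) * H).rank = r ∧
        (G * H).rank = r} =
      Nat.card {S : Submodule F ↥W // finrank F S = r} *
        (∏ i : Fin r, (Fintype.card F ^ n - Fintype.card F ^ (i : ℕ))) *
        Fintype.card F ^ r * Nat.card (LinearMap.ker L) ^ (n+1) := by
    have hrank' : ∀ G : Matrix (Fin (n+1)) (Fin M) F,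
        ((G.submatrix (Fin.castLE (Nat.sub_le (n+1) 1)) id) * H).rank =
          finrank F (span F (Set.range (fun i : Fin n =>
            ((((fun i' => L.rangeRestrict (G i')) ∘ Fin.castSucc) i : W) : Fin m → F)))) :=
      fun G => hrank n _
    have e1 : {G : Matrix (Fin (n+1)) (Fin M) F //
          ((G.submatrix (Fin.castLE (Nat.sub_le (n+1) 1)) id) * H).rank = r ∧
          (G * H).rank = r} ≃
        {g : Fin (n+1) → (Fin M → F) //
          (fun w : Fin (n+1) → W =>
            finrank F (span F (Set.range (fun i => ((w ∘ Fin.castSucc) i : Fin m → F)))) = r ∧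
            finrank F (span F (Set.range (fun i => (w i : Fin m → F)))) = r)
          (fun i => L.rangeRestrict (g i))} :=
      Equiv.subtypeEquivRight (fun G => by rw [hrank (n+1) G, hrank' G])
    have e2 : {w : Fin (n+1) → W //
          finrank F (span F (Set.range (fun i => ((w ∘ Fin.castSucc) i : Fin m → F)))) = r ∧
          finrank F (span F (Set.range (fun i => (w i : Fin m → F)))) = r} ≃
        {w : Fin (n+1) → W //
          finrank F (span F (Set.range (w ∘ Fin.castSucc))) = r ∧
          finrank F (span F (Set.range w)) = r} :=
      Equiv.subtypeEquivRight (fun w => by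
        rw [finrank_span_coe W (w ∘ Fin.castSucc), finrank_span_coe W w])
    calc Nat.card {G : Matrix (Fin (n+1)) (Fin M) F //
          ((G.submatrix (Fin.castLE (Nat.sub_le (n+1) 1)) id) * H).rank = r ∧
          (G * H).rank = r}
        = Nat.card {g : Fin (n+1) → (Fin M → F) //
            (fun w : Fin (n+1) → W =>
              finrank F (span F (Set.range (fun i => ((w ∘ Fin.castSucc) i : Fin m → F)))) = r ∧
              finrank F (span F (Set.range (fun i => (w i : Fin m → F)))) = r)
            (fun i => L.rangeRestrict (g i))} := Nat.card_congr e1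
      _ = Nat.card {w : Fin (n+1) → W //
            finrank F (span F (Set.range (fun i => ((w ∘ Fin.castSucc) i : Fin m → F)))) = r ∧
            finrank F (span F (Set.range (fun i => (w i : Fin m → F)))) = r} *
            Nat.card (LinearMap.ker L) ^ (n+1) :=
          card_comp_rangeRestrict L (n+1) (fun w : Fin (n+1) → W =>
            finrank F (span F (Set.range (fun i => ((w ∘ Fin.castSucc) i : Fin m → F)))) = r ∧
            finrank F (span F (Set.range (fun i => (w i : Fin m → F)))) = r)
      _ = Nat.card {w : Fin (n+1) → W //
            finrank F (span F (Set.range (w ∘ Fin.castSucc))) = r ∧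
            finrank F (span F (Set.range w)) = r} *
            Nat.card (LinearMap.ker L) ^ (n+1) := by rw [Nat.card_congr e2]
      _ = Nat.card {w : Fin n → W // finrank F (span F (Set.range w)) = r} *
            Fintype.card F ^ r * Nat.card (LinearMap.ker L) ^ (n+1) := by
            rw [card_joint n r]
      _ = _ := by rw [card_finrank_span n r hrn]
  -- positivity facts
  have hq2 : 1 < Fintype.card F := Fintype.one_lt_card
  have hKpos : 0 < Nat.card (LinearMap.ker L) := Nat.card_pos
  have hNSpos : 0 < Nat.card {S : Submodule F ↥W // finrank F S = r} := by
    haveI : FiniteDimensional F ↥W := inferInstance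
    let b : Basis (Fin k) F ↥W := finBasisOfFinrankEq F ↥W hW
    have hli : LinearIndependent F (b ∘ Fin.castLE hrk) :=
      b.linearIndependent.comp _ (Fin.castLE_injective hrk)
    haveI : Nonempty {S : Submodule F ↥W // finrank F S = r} :=
      ⟨⟨span F (Set.range (b ∘ Fin.castLE hrk)), by
        rw [finrank_span_eq_card hli, Fintype.card_fin]⟩⟩
    exact Nat.card_pos
  have hTpos : 0 < ∏ i : Fin r, (Fintype.card F ^ (n+1) - Fintype.card F ^ (i : ℕ)) := by
    apply Finset.prod_pos
    intro i _
    have : Fintype.card F ^ (i : ℕ) < Fintype.card F ^ (n+1) :=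
      Nat.pow_lt_pow_right hq2 (by omega)
    omega
  -- real arithmetic
  set Q : ℝ := (Fintype.card F : ℝ) with hQ
  have hQ1 : (1:ℝ) < Q := by rw [hQ]; exact_mod_cast hq2
  have hQ0 : (0:ℝ) < Q := by linarith
  have hcast : ∀ j, r ≤ j →
      ((∏ i : Fin r, (Fintype.card F ^ j - Fintype.card F ^ (i : ℕ)) : ℕ) : ℝ) =
        ∏ i ∈ Finset.range r, (Q ^ j - Q ^ i) := by
    intro j hj
    rw [Fin.prod_univ_eq_prod_range (fun i => Fintype.card F ^ j - Fintype.card F ^ i) r,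
      Nat.cast_prod]
    refine Finset.prod_congr rfl (fun i hi => ?_)
    have hi' : i < r := Finset.mem_range.mp hi
    have hle : Fintype.card F ^ i ≤ Fintype.card F ^ j :=
      Nat.pow_le_pow_right (by omega) (by omega)
    rw [Nat.cast_sub hle]
    push_cast
    ring
  have hnumR : ((Nat.card {G : Matrix (Fin (n+1)) (Fin M) F //
        ((G.submatrix (Fin.castLE (Nat.sub_le (n+1) 1)) id) * H).rank = r ∧
        (G * H).rank = r} : ℕ) : ℝ) =
      (Nat.card {S : Submodule F ↥W // finrank F S = r} : ℝ) *
        (∏ i ∈ Finset.range r, (Q ^ n - Q ^ i)) * Q ^ r *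
        (Nat.card (LinearMap.ker L) : ℝ) ^ (n+1) := by
    rw [hnum, Nat.cast_mul, Nat.cast_mul, Nat.cast_mul, hcast n hrn, Nat.cast_pow, Nat.cast_pow]
  have hdenR : ((Nat.card {G : Matrix (Fin (n+1)) (Fin M) F // (G * H).rank = r} : ℕ) : ℝ) =
      (Nat.card {S : Submodule F ↥W // finrank F S = r} : ℝ) *
        (∏ i ∈ Finset.range r, (Q ^ (n+1) - Q ^ i)) *
        (Nat.card (LinearMap.ker L) : ℝ) ^ (n+1) := by
    rw [hden, Nat.cast_mul, Nat.cast_mul, hcast (n+1) (by omega), Nat.cast_pow]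
  rw [hnumR, hdenR]
  have hApos : (0:ℝ) < ∏ i ∈ Finset.range r, (Q ^ (n+1) - Q ^ i) := by
    rw [← hcast (n+1) (by omega)]
    exact_mod_cast hTpos
  have hNSR : (0:ℝ) < (Nat.card {S : Submodule F ↥W // finrank F S = r} : ℝ) := by
    exact_mod_cast hNSpos
  have hKR : (0:ℝ) < (Nat.card (LinearMap.ker L) : ℝ) := by exact_mod_cast hKpos
  have hQd : (0:ℝ) < Q ^ (n+1) := by positivity
  have h2 : (Q : ℝ) ^ (-((n+1 : ℕ) : ℤ) + (r : ℤ)) = Q ^ r / Q ^ (n+1) := by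
    rw [zpow_add₀ (ne_of_gt hQ0), zpow_neg, zpow_natCast, zpow_natCast]
    ring
  have h1 : (Q : ℝ) ^ (-((n+1 : ℕ) : ℤ)) = (Q ^ (n+1))⁻¹ := by
    rw [zpow_neg, zpow_natCast]
  rw [h2, h1]
  have hden2 : (1:ℝ) - (Q ^ (n+1))⁻¹ ≠ 0 := by
    have : (Q ^ (n+1))⁻¹ < 1 := by
      rw [inv_lt_one_iff₀]
      right
      exact one_lt_pow₀ hQ1 (by omega)
    linarith
  have hden1 : (Nat.card {S : Submodule F ↥W // finrank F S = r} : ℝ) *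
      (∏ i ∈ Finset.range r, (Q ^ (n+1) - Q ^ i)) *
      (Nat.card (LinearMap.ker L) : ℝ) ^ (n+1) ≠ 0 := by positivity
  rw [div_eq_div_iff hden1 hden2]
  have hQdne : Q ^ (n+1) ≠ 0 := ne_of_gt hQd
  field_simp
  linear_combination telescope Q n r

end mainproof
end

section
/- Let q > 1 be a real number, M ≥ 1 an integer, and h_1, …, h_M arbitrary reals. For 1 ≤ r ≤ M define ħ_r = ∑_{i=r}^{M} (ζ^i_r / q^{i−r}) · h_i and ħ′_r = ∑_{k=r}^{M} ζ^k_r · h_k. Then for every r with 1 ≤ r ≤ M, ħ′_r = ∑_{k=r}^{M} ħ_k. -/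
lemma zetaC_key (q : ℝ) (hq0 : q ≠ 0) :
    ∀ n i r : ℕ, r + n = i →
      ∑ k ∈ Finset.Icc r i, zetaC q i k / q ^ (i - k) = zetaC q i r := by
  intro n
  induction n with
  | zero =>
      intro i r hri
      have : r = i := by omega
      subst this
      simp
  | succ n ih =>
      intro i r hri
      have hr : r ≤ i := by omega
      have hins : Finset.Icc r i = insert r (Finset.Icc (r + 1) i) := by
        rw [Finset.Icc_add_one_left_eq_Ioc, Finset.Ioc_insert_left hr]
      rw [hins, Finset.sum_insert (by simp [Finset.Icc_add_one_left_eq_Ioc]),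
        ih i (r + 1) (by omega)]
      have hz : zetaC q i (r + 1) = zetaC q i r * (1 - q ^ (-(i : ℤ) + (r : ℤ))) := by
        simp [zetaC, Finset.prod_range_succ]
      have hzp : q ^ (-(i : ℤ) + (r : ℤ)) = (q ^ (i - r))⁻¹ := by
        rw [show (-(i : ℤ) + (r : ℤ)) = -((i - r : ℕ) : ℤ) by push_cast; omega,
          zpow_neg, zpow_natCast]
      have hpow : q ^ (i - r) ≠ 0 := pow_ne_zero _ hq0
      rw [hz, hzp]
      field_simp
      ring

/-- `ħ'_r = ∑_{k=r}^M ħ_k`, where `ħ_r = ∑_{i=r}^M (ζ^i_r / q^{i-r}) h_i`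
and `ħ'_r = ∑_{k=r}^M ζ^k_r h_k`. -/
theorem hbar_prime_eq_sum_hbar (q : ℝ) (hq : 1 < q) (M : ℕ) (hM : 1 ≤ M) (h : ℕ → ℝ)
    (r : ℕ) (hr1 : 1 ≤ r) (hrM : r ≤ M) :
    ∑ k ∈ Finset.Icc r M, zetaC q k r * h k =
      ∑ k ∈ Finset.Icc r M, ∑ i ∈ Finset.Icc k M, (zetaC q i k / q ^ (i - k)) * h i := by
  have hq0 : q ≠ 0 := by linarith
  rw [Finset.sum_comm' (s' := fun i => Finset.Icc r i) (t' := Finset.Icc r M)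
    (by intro k i; simp only [Finset.mem_Icc]; omega)]
  refine Finset.sum_congr rfl fun i hi => ?_
  simp only [Finset.mem_Icc] at hi
  rw [← Finset.sum_mul, zetaC_key q hq0 (i - r) i r (by omega)]
end

section
/- Let q > 1 be a real number, M ≥ 1 an integer, and h_1, …, h_M nonnegative reals. For 1 ≤ r ≤ M define ħ_r = ∑_{i=r}^{M} (ζ^i_r / q^{i−r}) · h_i. Then ∑_{r=1}^{M} r·ħ_r ≤ ∑_{r=1}^{M} r·h_r. -/
lemma zetaC_nonneg (q : ℝ) (hq : 1 < q) (m r : ℕ) (hr : r ≤ m) : 0 ≤ zetaC q m r := by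
  apply Finset.prod_nonneg
  intro i hi
  have hi' : i < r := Finset.mem_range.mp hi
  have hle : -(m : ℤ) + i ≤ 0 := by omega
  have : q ^ (-(m : ℤ) + (i : ℤ)) ≤ 1 := zpow_le_one_of_nonpos₀ hq.le hle
  linarith

lemma zetaC_le_one (q : ℝ) (hq : 1 < q) (m r : ℕ) (hr : r ≤ m) : zetaC q m r ≤ 1 := by
  apply Finset.prod_le_one
  · intro i hi
    have hi' : i < r := Finset.mem_range.mp hi
    have hle : -(m : ℤ) + i ≤ 0 := by omega
    have : q ^ (-(m : ℤ) + (i : ℤ)) ≤ 1 := zpow_le_one_of_nonpos₀ hq.le hle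
    linarith
  · intro i _
    have : (0:ℝ) < q ^ (-(m : ℤ) + (i : ℤ)) := zpow_pos (by linarith) _
    linarith

lemma tail_sum (q : ℝ) (hq : 1 < q) (i : ℕ) :
    ∀ d s, s + d = i → ∑ r ∈ Finset.Icc s i, zetaC q i r / q ^ (i - r) = zetaC q i s := by
  have hq0 : (0:ℝ) < q := by linarith
  intro d
  induction d with
  | zero =>
      intro s hs
      subst hs
      simp
  | succ n ih =>
      intro s hs
      have hsi : s < i := by omega
      have hins : Finset.Icc s i = insert s (Finset.Icc (s+1) i) := by
        ext x; simp [Finset.mem_Icc, Finset.mem_insert]; omega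
      rw [hins, Finset.sum_insert (by simp), ih (s+1) (by omega)]
      have hrec : zetaC q i (s+1) = zetaC q i s * (1 - q ^ (-(i : ℤ) + (s : ℤ))) := by
        simp [zetaC, Finset.prod_range_succ]
      have hpow : q ^ (-(i : ℤ) + (s : ℤ)) = (q ^ (i - s))⁻¹ := by
        have : -(i : ℤ) + (s : ℤ) = -((i - s : ℕ) : ℤ) := by omega
        rw [this, zpow_neg, zpow_natCast]
      have hne : (q : ℝ) ^ (i - s) ≠ 0 := by positivity
      rw [hrec, hpow]
      field_simp
      ring

/-- With `ħ_r = ∑_{i=r}^M (ζ^i_r / q^{i-r}) h_i` for nonnegative `h_i`: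
`∑_{r=1}^M r ħ_r ≤ ∑_{r=1}^M r h_r`. -/
theorem sum_r_hbar_le (q : ℝ) (hq : 1 < q) (M : ℕ) (hM : 1 ≤ M) (h : ℕ → ℝ)
    (hnn : ∀ i ∈ Finset.Icc 1 M, 0 ≤ h i) :
    ∑ r ∈ Finset.Icc 1 M,
        (r : ℝ) * (∑ i ∈ Finset.Icc r M, (zetaC q i r / q ^ (i - r)) * h i) ≤
      ∑ r ∈ Finset.Icc 1 M, (r : ℝ) * h r := by
  have hq0 : (0:ℝ) < q := by linarith
  have swap :
      ∑ r ∈ Finset.Icc 1 M, ∑ i ∈ Finset.Icc r M,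
          (r : ℝ) * ((zetaC q i r / q ^ (i - r)) * h i)
        = ∑ i ∈ Finset.Icc 1 M, ∑ r ∈ Finset.Icc 1 i,
          (r : ℝ) * ((zetaC q i r / q ^ (i - r)) * h i) := by
    apply Finset.sum_comm'
    intro r i
    simp only [Finset.mem_Icc]
    omega
  calc ∑ r ∈ Finset.Icc 1 M,
        (r : ℝ) * (∑ i ∈ Finset.Icc r M, (zetaC q i r / q ^ (i - r)) * h i)
      = ∑ i ∈ Finset.Icc 1 M, ∑ r ∈ Finset.Icc 1 i,
          (r : ℝ) * ((zetaC q i r / q ^ (i - r)) * h i) := by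
        rw [← swap]; simp [Finset.mul_sum]
    _ ≤ ∑ i ∈ Finset.Icc 1 M, (i : ℝ) * h i := by
        apply Finset.sum_le_sum
        intro i hi
        have hi' := Finset.mem_Icc.mp hi
        have hhi := hnn i hi
        have key : ∑ r ∈ Finset.Icc 1 i, (r : ℝ) * (zetaC q i r / q ^ (i - r)) ≤ i := by
          have expand : ∀ r ∈ Finset.Icc 1 i,
              (r : ℝ) * (zetaC q i r / q ^ (i - r))
                = ∑ _s ∈ Finset.Icc 1 r, zetaC q i r / q ^ (i - r) := by
            intro r hr
            rw [Finset.sum_const, Nat.card_Icc]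
            simp
          rw [Finset.sum_congr rfl expand]
          have swap2 :
              ∑ r ∈ Finset.Icc 1 i, ∑ s ∈ Finset.Icc 1 r, zetaC q i r / q ^ (i - r)
                = ∑ s ∈ Finset.Icc 1 i, ∑ r ∈ Finset.Icc s i, zetaC q i r / q ^ (i - r) := by
            apply Finset.sum_comm'
            intro r s
            simp only [Finset.mem_Icc]
            omega
          rw [swap2]
          have : ∑ s ∈ Finset.Icc 1 i, ∑ r ∈ Finset.Icc s i, zetaC q i r / q ^ (i - r)
              = ∑ s ∈ Finset.Icc 1 i, zetaC q i s := by
            apply Finset.sum_congr rfl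
            intro s hs
            have hs' := Finset.mem_Icc.mp hs
            exact tail_sum q hq i (i - s) s (by omega)
          rw [this]
          calc ∑ s ∈ Finset.Icc 1 i, zetaC q i s ≤ ∑ s ∈ Finset.Icc 1 i, 1 :=
                Finset.sum_le_sum fun s hs => zetaC_le_one q hq i s (Finset.mem_Icc.mp hs).2
            _ = i := by simp
        calc ∑ r ∈ Finset.Icc 1 i, (r : ℝ) * ((zetaC q i r / q ^ (i - r)) * h i)
            = (∑ r ∈ Finset.Icc 1 i, (r : ℝ) * (zetaC q i r / q ^ (i - r))) * h i := by
              rw [Finset.sum_mul]; apply Finset.sum_congr rfl; intros; ring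
          _ ≤ (i : ℝ) * h i := mul_le_mul_of_nonneg_right key hhi
end

section
/- Let M ≥ 1 be an integer, η ∈ (0,1), and let Δ, D be integers with (Δ+1)·η ≥ M and Δ < D. Given a probability distribution Ψ on {1, …, D}, define Ψ̃ on {1, …, Δ} by Ψ̃_d = Ψ_d for 1 ≤ d < Δ and Ψ̃_Δ = ∑_{d=Δ}^{D} Ψ_d. Then Ψ̃ is a probability distribution on {1, …, Δ}, and for all nonnegative reals ħ_1, …, ħ_M and all x ∈ [0, 1−η], Ω(x; ħ, Ψ̃) ≥ Ω(x; ħ, Ψ). Consequently, for any real θ, if Ω(x; ħ, Ψ) + θ·ln(1−x) ≥ 0 for all x ∈ [0, 1−η], then also Ω(x; ħ, Ψ̃) + θ·ln(1−x) ≥ 0 for all x ∈ [0, 1−η]. -/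
/-- `S_r(x; Ψ) = ∑_{d=r+1}^D d Ψ_d I_{d-r,r}(x) + ∑_{d=1}^{min(r,D)} d Ψ_d`. -/
noncomputable def Sfun (D r : ℕ) (Ψ : ℕ → ℝ) (x : ℝ) : ℝ :=
  (∑ d ∈ Finset.Icc (r + 1) D, (d : ℝ) * Ψ d * incBeta (d - r) r x) +
    ∑ d ∈ Finset.Icc 1 (min r D), (d : ℝ) * Ψ d

/-- `Ω(x; ħ, Ψ) = ∑_{r=1}^M ħ_r S_r(x; Ψ)`. -/
noncomputable def OmegaFun (M D : ℕ) (hb Ψ : ℕ → ℝ) (x : ℝ) : ℝ :=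
  ∑ r ∈ Finset.Icc 1 M, hb r * Sfun D r Ψ x

/-- The truncated degree distribution `Ψ̃`: `Ψ̃_d = Ψ_d` for `d < Δ`,
`Ψ̃_Δ = ∑_{d=Δ}^D Ψ_d`, and `Ψ̃_d = 0` for `d > Δ`. -/
noncomputable def tildeDist (Δ D : ℕ) (Ψ : ℕ → ℝ) : ℕ → ℝ := fun d =>
  if d < Δ then Ψ d else if d = Δ then ∑ e ∈ Finset.Icc Δ D, Ψ e else 0

lemma incBeta_zero (b : ℕ) (x : ℝ) : incBeta 0 b x = 1 := by
  have h := add_pow x (1 - x) (b - 1)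
  simp only [add_sub_cancel, one_pow] at h
  simp only [incBeta, Nat.zero_add]
  rw [show Finset.Icc 0 (b - 1) = Finset.range (b - 1 + 1) by
    ext j; simp [Nat.lt_succ_iff]]
  rw [show (∑ j ∈ Finset.range (b - 1 + 1),
      (Nat.choose (b - 1) j : ℝ) * x ^ j * (1 - x) ^ (b - 1 - j))
      = ∑ j ∈ Finset.range (b - 1 + 1),
      x ^ j * (1 - x) ^ (b - 1 - j) * (Nat.choose (b - 1) j : ℝ) from
    Finset.sum_congr rfl (fun j _ => by ring)]
  exact h.symm

lemma T_step (r d : ℕ) (η x : ℝ) (hr : 1 ≤ r) (hrd : r ≤ d) (hη0 : 0 < η)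
    (hη1 : η < 1) (hx0 : 0 ≤ x) (hx1 : x ≤ 1 - η)
    (hrd1 : (r : ℝ) ≤ ((d : ℝ) + 1) * η) :
    ((d : ℝ) + 1) * incBeta (d + 1 - r) r x ≤ (d : ℝ) * incBeta (d - r) r x := by
  have hd1 : 1 ≤ d := le_trans hr hrd
  have h1x : η ≤ 1 - x := by linarith
  have h1x0 : 0 < 1 - x := lt_of_lt_of_le hη0 h1x
  set u : ℕ → ℝ := fun j => (Nat.choose (d - 1) j : ℝ) * x ^ j * (1 - x) ^ (d - 1 - j)
    with hu
  have hunn : ∀ j, 0 ≤ u j := by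
    intro j
    have : (0:ℝ) ≤ 1 - x := le_of_lt h1x0
    positivity
  set P : ℝ := ∑ j ∈ Finset.Icc (d - r) (d - 1), u j with hP
  set t : ℝ := u (d - r) with ht
  have hstep : ∀ j, d - r ≤ j → j + 1 ≤ d - 1 → u (j + 1) ≤ u j := by
    intro j hj1 hj2
    have hc := Nat.choose_succ_right_eq (d - 1) j
    have hc' : ((d - 1).choose (j + 1) : ℝ) * ((j : ℝ) + 1)
        = ((d - 1).choose j : ℝ) * ((d - 1 - j : ℕ) : ℝ) := by exact_mod_cast hc
    have e1 : d - 1 - j = (d - 1 - (j + 1)) + 1 := by omega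
    have key : u (j + 1) * (((j : ℝ) + 1) * (1 - x)) = ((d - 1 - j : ℕ) : ℝ) * x * u j := by
      simp only [hu]
      rw [e1] at hc' ⊢
      rw [pow_succ, pow_succ]
      linear_combination (x ^ j * x * (1 - x) ^ (d - 1 - (j + 1)) * (1 - x)) * hc'
    have hnum : ((d - 1 - j : ℕ) : ℝ) * x ≤ ((j : ℝ) + 1) * (1 - x) := by
      have h1 : ((d - 1 - j : ℕ) : ℝ) ≤ (r : ℝ) - 1 := by
        have h : (d - 1 - j : ℕ) ≤ r - 1 := by omega
        calc ((d - 1 - j : ℕ) : ℝ) ≤ ((r - 1 : ℕ) : ℝ) := by exact_mod_cast h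
          _ = (r : ℝ) - 1 := by push_cast [hr]; ring
      have h2 : (d : ℝ) - (r : ℝ) + 1 ≤ (j : ℝ) + 1 := by
        have h : ((d - r : ℕ) : ℝ) ≤ (j : ℝ) := by exact_mod_cast hj1
        rw [Nat.cast_sub hrd] at h
        linarith
      have hrpos : (0:ℝ) ≤ (r : ℝ) - 1 := by
        have : (1:ℝ) ≤ (r : ℝ) := by exact_mod_cast hr
        linarith
      have hdr : (0:ℝ) ≤ (d : ℝ) - (r : ℝ) + 1 := by
        have : (r : ℝ) ≤ (d : ℝ) := by exact_mod_cast hrd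
        linarith
      calc ((d - 1 - j : ℕ) : ℝ) * x ≤ ((r : ℝ) - 1) * x :=
            mul_le_mul_of_nonneg_right h1 hx0
        _ ≤ ((r : ℝ) - 1) * (1 - η) := mul_le_mul_of_nonneg_left hx1 hrpos
        _ ≤ ((d : ℝ) - (r : ℝ) + 1) * η := by nlinarith
        _ ≤ ((d : ℝ) - (r : ℝ) + 1) * (1 - x) := mul_le_mul_of_nonneg_left h1x hdr
        _ ≤ ((j : ℝ) + 1) * (1 - x) := mul_le_mul_of_nonneg_right h2 (le_of_lt h1x0)
    have hpos : 0 < ((j : ℝ) + 1) * (1 - x) := by positivity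
    rw [← mul_le_mul_iff_of_pos_right hpos, key]
    calc ((d - 1 - j : ℕ) : ℝ) * x * u j ≤ ((j : ℝ) + 1) * (1 - x) * u j :=
          mul_le_mul_of_nonneg_right hnum (hunn j)
      _ = u j * (((j : ℝ) + 1) * (1 - x)) := by ring
  have hchain : ∀ j, d - r ≤ j → j ≤ d - 1 → u j ≤ t := by
    intro j hj
    induction j, hj using Nat.le_induction with
    | base => intro _; exact le_refl _
    | succ e he ih =>
      intro h2
      exact le_trans (hstep e he h2) (ih (by omega))
  have htnn : 0 ≤ t := hunn _
  have hPrt : P ≤ (r : ℝ) * t := by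
    have hcard : (Finset.Icc (d - r) (d - 1)).card = r := by
      rw [Nat.card_Icc]; omega
    calc P ≤ (Finset.Icc (d - r) (d - 1)).card • t :=
          Finset.sum_le_card_nsmul _ _ _ (fun j hj => by
            rw [Finset.mem_Icc] at hj; exact hchain j hj.1 hj.2)
      _ = (r : ℝ) * t := by rw [hcard, nsmul_eq_mul]
  have hIB1 : incBeta (d - r) r x = P := by
    have e : d - r + r - 1 = d - 1 := by omega
    simp only [incBeta, e, hP, hu]
  have hud : u d = 0 := by
    simp [hu, Nat.choose_eq_zero_of_lt (show d - 1 < d by omega)]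
  have hsum_shift : ∑ j ∈ Finset.Icc (d - r) (d - 1), u (j + 1) = P - t := by
    have e1 : ∑ j ∈ Finset.Icc (d - r) (d - 1), u (j + 1)
        = ∑ k ∈ Finset.Icc (d - r + 1) (d - 1 + 1), u k := by
      rw [← Finset.map_add_right_Icc _ _ 1, Finset.sum_map]
      rfl
    have e2 : ∑ k ∈ Finset.Icc (d - r + 1) (d - 1 + 1), u k
        = ∑ k ∈ Finset.Ioc (d - r) (d - 1), u k + u d := by
      rw [Finset.Icc_add_one_left_eq_Ioc, Finset.sum_Ioc_succ_top (by omega : d - r ≤ d - 1) u,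
        show d - 1 + 1 = d from by omega]
    have e3 : P = t + ∑ k ∈ Finset.Ioc (d - r) (d - 1), u k := by
      rw [hP, Finset.Icc_eq_cons_Ioc (by omega : d - r ≤ d - 1), Finset.sum_cons]
    rw [e1, e2, hud]
    linarith [e3]
  have hIB2 : incBeta (d + 1 - r) r x = x * P + (1 - x) * (P - t) := by
    have e : d + 1 - r + r - 1 = d := by omega
    simp only [incBeta, e]
    have emap : Finset.Icc (d + 1 - r) d
        = Finset.map (addRightEmbedding 1) (Finset.Icc (d - r) (d - 1)) := by
      rw [Finset.map_add_right_Icc]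
      congr 1 <;> omega
    rw [emap, Finset.sum_map]
    simp only [addRightEmbedding_apply]
    have epoint : ∀ j ∈ Finset.Icc (d - r) (d - 1),
        (Nat.choose d (j + 1) : ℝ) * x ^ (j + 1) * (1 - x) ^ (d - (j + 1))
        = x * u j + (1 - x) * u (j + 1) := by
      intro j hj
      rw [Finset.mem_Icc] at hj
      have hpas : (Nat.choose d (j + 1) : ℝ)
          = ((d - 1).choose j : ℝ) + ((d - 1).choose (j + 1) : ℝ) := by
        rw [show d = d - 1 + 1 from by omega, Nat.choose_succ_succ]
        push_cast; ring
      have e2 : d - (j + 1) = d - 1 - j := by omega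
      rw [hpas, e2]
      by_cases hcase : j = d - 1
      · subst hcase
        have hz : (d - 1).choose (d - 1 + 1) = 0 := Nat.choose_eq_zero_of_lt (by omega)
        simp only [hu, hz, Nat.cast_zero]
        rw [show d - 1 - (d - 1 + 1) = 0 from by omega, show d - 1 - (d - 1) = 0 from by omega,
          pow_succ, pow_zero]
        ring
      · have e3 : d - 1 - j = (d - 1 - (j + 1)) + 1 := by omega
        simp only [hu]
        rw [e3, pow_succ, pow_succ]
        ring
    rw [Finset.sum_congr rfl epoint, Finset.sum_add_distrib, ← Finset.mul_sum,
      ← Finset.mul_sum, hsum_shift]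
  rw [hIB1, hIB2]
  have hr1x : (r : ℝ) ≤ ((d : ℝ) + 1) * (1 - x) := by
    calc (r : ℝ) ≤ ((d : ℝ) + 1) * η := hrd1
      _ ≤ ((d : ℝ) + 1) * (1 - x) := by
          apply mul_le_mul_of_nonneg_left h1x
          positivity
  have hkey : P ≤ ((d : ℝ) + 1) * ((1 - x) * t) := by
    calc P ≤ (r : ℝ) * t := hPrt
      _ ≤ (((d : ℝ) + 1) * (1 - x)) * t := mul_le_mul_of_nonneg_right hr1x htnn
      _ = ((d : ℝ) + 1) * ((1 - x) * t) := by ring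
  nlinarith [hkey]

lemma T_mono (r Δ d : ℕ) (η x : ℝ) (hr : 1 ≤ r) (hrΔ : r ≤ Δ) (hΔd : Δ ≤ d)
    (hη0 : 0 < η) (hη1 : η < 1) (hx0 : 0 ≤ x) (hx1 : x ≤ 1 - η)
    (hrΔ1 : (r : ℝ) ≤ ((Δ : ℝ) + 1) * η) :
    (d : ℝ) * incBeta (d - r) r x ≤ (Δ : ℝ) * incBeta (Δ - r) r x := by
  induction d, hΔd using Nat.le_induction with
  | base => exact le_refl _
  | succ e he ih =>
    have h1 : (r : ℝ) ≤ ((e : ℝ) + 1) * η := by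
      refine le_trans hrΔ1 (mul_le_mul_of_nonneg_right ?_ (le_of_lt hη0))
      have : (Δ : ℝ) ≤ (e : ℝ) := by exact_mod_cast he
      linarith
    calc ((e + 1 : ℕ) : ℝ) * incBeta (e + 1 - r) r x
        = ((e : ℝ) + 1) * incBeta (e + 1 - r) r x := by push_cast; ring
      _ ≤ (e : ℝ) * incBeta (e - r) r x :=
          T_step r e η x hr (le_trans hrΔ he) hη0 hη1 hx0 hx1 h1
      _ ≤ (Δ : ℝ) * incBeta (Δ - r) r x := ih


lemma Sfun_eq (E r : ℕ) (Φ : ℕ → ℝ) (x : ℝ) (hr : 1 ≤ r) (hrE : r ≤ E) :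
    Sfun E r Φ x = ∑ d ∈ Finset.Icc 1 E,
      Φ d * (if d ≤ r then (d : ℝ) else (d : ℝ) * incBeta (d - r) r x) := by
  have hmin : min r E = r := min_eq_left hrE
  have hsplit : ∑ d ∈ Finset.Icc 1 E,
      Φ d * (if d ≤ r then (d : ℝ) else (d : ℝ) * incBeta (d - r) r x)
      = (∑ d ∈ Finset.Icc 1 r,
          Φ d * (if d ≤ r then (d : ℝ) else (d : ℝ) * incBeta (d - r) r x))
        + ∑ d ∈ Finset.Icc (r + 1) E,
          Φ d * (if d ≤ r then (d : ℝ) else (d : ℝ) * incBeta (d - r) r x) := by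
    rw [show Finset.Icc 1 r = Finset.Ioc 0 r from (Finset.Icc_add_one_left_eq_Ioc 0 r),
      show Finset.Icc (r + 1) E = Finset.Ioc r E from (Finset.Icc_add_one_left_eq_Ioc r E),
      show Finset.Icc 1 E = Finset.Ioc 0 E from (Finset.Icc_add_one_left_eq_Ioc 0 E),
      Finset.sum_Ioc_consecutive _ (Nat.zero_le r) hrE]
  rw [hsplit]
  unfold Sfun
  rw [hmin]
  rw [Finset.sum_congr rfl (fun d hd => by
      rw [Finset.mem_Icc] at hd
      rw [if_pos hd.2]
      ring : ∀ d ∈ Finset.Icc 1 r, Φ d * _ = (d : ℝ) * Φ d),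
    Finset.sum_congr rfl (fun d hd => by
      rw [Finset.mem_Icc] at hd
      rw [if_neg (by omega)]
      ring : ∀ d ∈ Finset.Icc (r + 1) E,
        Φ d * _ = (d : ℝ) * Φ d * incBeta (d - r) r x)]
  ring

lemma Sfun_le (r Δ D : ℕ) (η x : ℝ) (Ψ : ℕ → ℝ) (hr : 1 ≤ r) (hrΔ : r ≤ Δ)
    (hΔD : Δ < D) (hη0 : 0 < η) (hη1 : η < 1) (hx0 : 0 ≤ x) (hx1 : x ≤ 1 - η)
    (hrΔ1 : (r : ℝ) ≤ ((Δ : ℝ) + 1) * η)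
    (hΨnn : ∀ d ∈ Finset.Icc 1 D, 0 ≤ Ψ d) :
    Sfun D r Ψ x ≤ Sfun Δ r (tildeDist Δ D Ψ) x := by
  have hΔ1 : 1 ≤ Δ := le_trans hr hrΔ
  set g : ℕ → ℝ := fun d => if d ≤ r then (d : ℝ) else (d : ℝ) * incBeta (d - r) r x
    with hg
  rw [Sfun_eq D r Ψ x hr (by omega), Sfun_eq Δ r (tildeDist Δ D Ψ) x hr hrΔ]
  have hgΔ : g Δ = (Δ : ℝ) * incBeta (Δ - r) r x := by
    by_cases h : Δ ≤ r
    · have hΔr : Δ = r := le_antisymm h hrΔ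
      simp only [hg, if_pos h, hΔr, Nat.sub_self, incBeta_zero, mul_one]
      simp
    · simp only [hg, if_neg h]
  have hgmono : ∀ d, Δ ≤ d → g d ≤ g Δ := by
    intro d hd
    by_cases h : d ≤ r
    · have : d = Δ := by omega
      rw [this]
    · have hgd : g d = (d : ℝ) * incBeta (d - r) r x := by simp only [hg, if_neg h]
      rw [hgd, hgΔ]
      exact T_mono r Δ d η x hr hrΔ hd hη0 hη1 hx0 hx1 hrΔ1
  -- split RHS sum
  have hRHS : ∑ d ∈ Finset.Icc 1 Δ, tildeDist Δ D Ψ d * g d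
      = (∑ d ∈ Finset.Icc 1 (Δ - 1), Ψ d * g d)
        + (∑ e ∈ Finset.Icc Δ D, Ψ e) * g Δ := by
    have h := Finset.sum_Icc_succ_top (show 1 ≤ Δ - 1 + 1 by omega)
      (fun d => tildeDist Δ D Ψ d * g d)
    rw [show Δ - 1 + 1 = Δ from by omega] at h
    rw [h]
    congr 1
    · apply Finset.sum_congr rfl
      intro d hd
      rw [Finset.mem_Icc] at hd
      have : d < Δ := by omega
      simp [tildeDist, this]
    · simp [tildeDist]
  -- split LHS sum
  have hLHS : ∑ d ∈ Finset.Icc 1 D, Ψ d * g d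
      = (∑ d ∈ Finset.Icc 1 (Δ - 1), Ψ d * g d)
        + ∑ d ∈ Finset.Icc Δ D, Ψ d * g d := by
    have h := Finset.sum_Ioc_consecutive (f := fun d => Ψ d * g d)
      (Nat.zero_le (Δ - 1)) (show Δ - 1 ≤ D by omega)
    rw [show Finset.Icc 1 D = Finset.Ioc 0 D from (Finset.Icc_add_one_left_eq_Ioc 0 D),
      show Finset.Icc 1 (Δ - 1) = Finset.Ioc 0 (Δ - 1) from (Finset.Icc_add_one_left_eq_Ioc 0 (Δ - 1)),
      show Finset.Icc Δ D = Finset.Ioc (Δ - 1) D from by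
        rw [← Finset.Icc_add_one_left_eq_Ioc]; congr 1; omega,
      ← h]
  rw [hLHS, hRHS]
  gcongr ?_ + ?_
  · exact le_refl _
  · rw [Finset.sum_mul]
    apply Finset.sum_le_sum
    intro d hd
    rw [Finset.mem_Icc] at hd
    have hnn : 0 ≤ Ψ d := hΨnn d (Finset.mem_Icc.mpr ⟨by omega, hd.2⟩)
    exact mul_le_mul_of_nonneg_left (hgmono d hd.1) hnn


theorem truncation_improves (M : ℕ) (hM : 1 ≤ M) (η : ℝ) (hη0 : 0 < η) (hη1 : η < 1)
    (Δ D : ℕ) (hΔη : (M : ℝ) ≤ ((Δ : ℝ) + 1) * η) (hΔD : Δ < D)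
    (Ψ : ℕ → ℝ) (hΨnn : ∀ d ∈ Finset.Icc 1 D, 0 ≤ Ψ d)
    (hΨ1 : ∑ d ∈ Finset.Icc 1 D, Ψ d = 1) :
    (∀ d ∈ Finset.Icc 1 Δ, 0 ≤ tildeDist Δ D Ψ d) ∧
    (∑ d ∈ Finset.Icc 1 Δ, tildeDist Δ D Ψ d = 1) ∧
    (∀ hb : ℕ → ℝ, (∀ r ∈ Finset.Icc 1 M, 0 ≤ hb r) →
      (∀ x ∈ Set.Icc (0:ℝ) (1 - η),
        OmegaFun M Δ hb (tildeDist Δ D Ψ) x ≥ OmegaFun M D hb Ψ x) ∧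
      (∀ θ : ℝ,
        (∀ x ∈ Set.Icc (0:ℝ) (1 - η), OmegaFun M D hb Ψ x + θ * Real.log (1 - x) ≥ 0) →
        ∀ x ∈ Set.Icc (0:ℝ) (1 - η),
          OmegaFun M Δ hb (tildeDist Δ D Ψ) x + θ * Real.log (1 - x) ≥ 0)) := by
  have hMΔ : M ≤ Δ := by
    have h1 : (M : ℝ) < (Δ : ℝ) + 1 := by nlinarith [Nat.cast_nonneg (α := ℝ) Δ]
    have h2 : M < Δ + 1 := by exact_mod_cast h1
    omega
  have hΔ1 : 1 ≤ Δ := le_trans hM hMΔ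
  refine ⟨?_, ?_, ?_⟩
  · intro d hd
    rw [Finset.mem_Icc] at hd
    by_cases h : d < Δ
    · simp only [tildeDist, if_pos h]
      exact hΨnn d (Finset.mem_Icc.mpr ⟨hd.1, by omega⟩)
    · have hdΔ : d = Δ := by omega
      subst hdΔ
      simp only [tildeDist, lt_irrefl, if_false, if_pos rfl]
      apply Finset.sum_nonneg
      intro e he
      rw [Finset.mem_Icc] at he
      exact hΨnn e (Finset.mem_Icc.mpr ⟨by omega, he.2⟩)
  · have h := Finset.sum_Icc_succ_top (show 1 ≤ Δ - 1 + 1 by omega) (tildeDist Δ D Ψ)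
    rw [show Δ - 1 + 1 = Δ from by omega] at h
    rw [h]
    have e1 : ∑ d ∈ Finset.Icc 1 (Δ - 1), tildeDist Δ D Ψ d
        = ∑ d ∈ Finset.Icc 1 (Δ - 1), Ψ d := by
      apply Finset.sum_congr rfl
      intro d hd
      rw [Finset.mem_Icc] at hd
      have : d < Δ := by omega
      simp [tildeDist, this]
    have e2 : tildeDist Δ D Ψ Δ = ∑ e ∈ Finset.Icc Δ D, Ψ e := by
      simp [tildeDist]
    rw [e1, e2]
    have hjoin := Finset.sum_Ioc_consecutive (f := Ψ)
      (Nat.zero_le (Δ - 1)) (show Δ - 1 ≤ D by omega)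
    rw [show Finset.Icc 1 (Δ - 1) = Finset.Ioc 0 (Δ - 1) from (Finset.Icc_add_one_left_eq_Ioc 0 (Δ - 1)),
      show Finset.Icc Δ D = Finset.Ioc (Δ - 1) D from by
        rw [← Finset.Icc_add_one_left_eq_Ioc]; congr 1; omega,
      hjoin, show Finset.Ioc 0 D = Finset.Icc 1 D from (Finset.Icc_add_one_left_eq_Ioc 0 D).symm, hΨ1]
  · intro hb hbnn
    have hx0' : ∀ x ∈ Set.Icc (0:ℝ) (1 - η),
        OmegaFun M Δ hb (tildeDist Δ D Ψ) x ≥ OmegaFun M D hb Ψ x := by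
      intro x hx
      obtain ⟨hx0, hx1⟩ := hx
      apply Finset.sum_le_sum
      intro r hr
      have hr' := Finset.mem_Icc.mp hr
      apply mul_le_mul_of_nonneg_left _ (hbnn r hr)
      apply Sfun_le r Δ D η x Ψ hr'.1 (le_trans hr'.2 hMΔ) hΔD hη0 hη1 hx0 hx1
        (le_trans (by exact_mod_cast hr'.2) hΔη) hΨnn
    refine ⟨hx0', ?_⟩
    intro θ hθ x hx
    have h1 := hx0' x hx
    have h2 := hθ x hx
    linarith
end

section
/- Let M ≥ 1 be an integer and η ∈ (0,1), and let d, r be integers with 1 ≤ r ≤ M, d ≥ r+2, and d·η ≥ M. Then for all x with 0 < x ≤ 1−η, d·I_{d−r,r}(x) ≤ (d−1)·I_{d−1−r,r}(x). -/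
theorem d_incBeta_decreasing (M : ℕ) (hM : 1 ≤ M) (η : ℝ) (hη0 : 0 < η) (hη1 : η < 1)
    (d r : ℕ) (hr1 : 1 ≤ r) (hrM : r ≤ M) (hd : r + 2 ≤ d)
    (hdη : (M : ℝ) ≤ (d : ℝ) * η)
    (x : ℝ) (hx0 : 0 < x) (hx1 : x ≤ 1 - η) :
    (d : ℝ) * incBeta (d - r) r x ≤ ((d : ℝ) - 1) * incBeta (d - 1 - r) r x := by
  obtain ⟨s, rfl⟩ : ∃ s, d = s + r := ⟨d - r, by omega⟩
  have hs2 : 2 ≤ s := by omega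
  have h1x : (0:ℝ) ≤ 1 - x := by linarith
  have hA : incBeta (s + r - r) r x
      = ∑ i ∈ Finset.range r, (Nat.choose (s + r - 1) (s + i) : ℝ) * x ^ (s + i)
          * (1 - x) ^ (r - 1 - i) := by
    have hsr : s + r - r = s := by omega
    rw [hsr]
    unfold incBeta
    have hIcc : Finset.Icc s (s + r - 1) = Finset.Ico s (s + r) := by
      ext j; simp only [Finset.mem_Icc, Finset.mem_Ico]; omega
    rw [hIcc, Finset.sum_Ico_eq_sum_range]
    have hrr : s + r - s = r := by omega
    rw [hrr]
    refine Finset.sum_congr rfl fun i _ => ?_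
    have he : s + r - 1 - (s + i) = r - 1 - i := by omega
    rw [he]
  have hB : incBeta (s + r - 1 - r) r x
      = ∑ i ∈ Finset.range r, (Nat.choose (s + r - 2) (s - 1 + i) : ℝ) * x ^ (s - 1 + i)
          * (1 - x) ^ (r - 1 - i) := by
    have hsr : s + r - 1 - r = s - 1 := by omega
    rw [hsr]
    unfold incBeta
    have he1 : s - 1 + r - 1 = s + r - 2 := by omega
    rw [he1]
    have hIcc : Finset.Icc (s - 1) (s + r - 2) = Finset.Ico (s - 1) (s - 1 + r) := by
      ext j; simp only [Finset.mem_Icc, Finset.mem_Ico]; omega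
    rw [hIcc, Finset.sum_Ico_eq_sum_range]
    have hrr : s - 1 + r - (s - 1) = r := by omega
    rw [hrr]
    refine Finset.sum_congr rfl fun i _ => ?_
    have he : s + r - 2 - (s - 1 + i) = r - 1 - i := by omega
    rw [he]
  rw [hA, hB, Finset.mul_sum, Finset.mul_sum]
  apply Finset.sum_le_sum
  intro i hi
  simp only [Finset.mem_range] at hi
  -- key binomial identity
  have hkey : (s + r - 1) * Nat.choose (s + r - 2) (s - 1 + i)
      = Nat.choose (s + r - 1) (s + i) * (s + i) := by
    have h := Nat.add_one_mul_choose_eq (s + r - 2) (s - 1 + i)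
    have e1 : s + r - 2 + 1 = s + r - 1 := by omega
    have e2 : s - 1 + i + 1 = s + i := by omega
    rw [e1, e2] at h
    exact h
  have hc : ((s + r - 1 : ℕ) : ℝ) * (Nat.choose (s + r - 2) (s - 1 + i) : ℝ)
      = (Nat.choose (s + r - 1) (s + i) : ℝ) * ((s + i : ℕ) : ℝ) := by
    exact_mod_cast congrArg (Nat.cast : ℕ → ℝ) hkey
  have hdx : ((s + r : ℕ) : ℝ) * x ≤ ((s + i : ℕ) : ℝ) := by
    have hr' : (r : ℝ) ≤ (M : ℝ) := by exact_mod_cast hrM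
    have hi0 : (0:ℝ) ≤ (i : ℝ) := Nat.cast_nonneg i
    push_cast
    push_cast at hdη
    nlinarith
  have hxp : x ^ (s + i) = x * x ^ (s - 1 + i) := by
    have h : s + i = (s - 1 + i) + 1 := by omega
    rw [h, pow_succ]; ring
  have hcast : ((s + r - 1 : ℕ) : ℝ) = ((s + r : ℕ) : ℝ) - 1 := by
    have h1 : (1:ℕ) ≤ s + r := by omega
    push_cast [h1]
    ring
  have hXY : (0:ℝ) ≤ x ^ (s - 1 + i) * (1 - x) ^ (r - 1 - i) :=
    mul_nonneg (pow_nonneg hx0.le _) (pow_nonneg h1x _)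
  have hC1 : (0:ℝ) ≤ (Nat.choose (s + r - 1) (s + i) : ℝ) := Nat.cast_nonneg _
  rw [hxp]
  calc ((s + r : ℕ) : ℝ) * ((Nat.choose (s + r - 1) (s + i) : ℝ) * (x * x ^ (s - 1 + i))
          * (1 - x) ^ (r - 1 - i))
      = (((s + r : ℕ) : ℝ) * x) * ((Nat.choose (s + r - 1) (s + i) : ℝ)
          * (x ^ (s - 1 + i) * (1 - x) ^ (r - 1 - i))) := by ring
    _ ≤ ((s + i : ℕ) : ℝ) * ((Nat.choose (s + r - 1) (s + i) : ℝ)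
          * (x ^ (s - 1 + i) * (1 - x) ^ (r - 1 - i))) :=
        mul_le_mul_of_nonneg_right hdx (mul_nonneg hC1 hXY)
    _ = ((Nat.choose (s + r - 1) (s + i) : ℝ) * ((s + i : ℕ) : ℝ))
          * (x ^ (s - 1 + i) * (1 - x) ^ (r - 1 - i)) := by ring
    _ = (((s + r - 1 : ℕ) : ℝ) * (Nat.choose (s + r - 2) (s - 1 + i) : ℝ))
          * (x ^ (s - 1 + i) * (1 - x) ^ (r - 1 - i)) := by rw [hc]
    _ = (((s + r : ℕ) : ℝ) - 1) * ((Nat.choose (s + r - 2) (s - 1 + i) : ℝ)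
          * x ^ (s - 1 + i) * (1 - x) ^ (r - 1 - i)) := by rw [hcast]; ring
end

section
/- Let M ≥ 1 be an integer, η ∈ (0,1), and let r′, D be integers with 1 ≤ r′ ≤ M, D ≥ r′+1, and (D+1)·η ≥ M. Then for all x with 0 < x ≤ 1−η, the series ∑_{d=D+1}^{∞} (1/(d−1)) · I_{d−r′,r′}(x) converges and is strictly less than I_{D−r′,r′}(x). -/
lemma aux_incBeta_eq (a b : ℕ) (hb : 1 ≤ b) (x : ℝ) :
    incBeta a b x =
      ∑ k ∈ Finset.range b, (Nat.choose (a + b - 1) k : ℝ) * x ^ (a + b - 1 - k) * (1 - x) ^ k := by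
  unfold incBeta
  refine Finset.sum_nbij' (i := fun j => a + b - 1 - j) (j := fun k => a + b - 1 - k) ?_ ?_ ?_ ?_ ?_
  · intro j hj
    simp only [Finset.mem_Icc] at hj
    simp only [Finset.mem_range]
    omega
  · intro k hk
    simp only [Finset.mem_range] at hk
    simp only [Finset.mem_Icc]
    omega
  · intro j hj
    simp only [Finset.mem_Icc] at hj
    show a + b - 1 - (a + b - 1 - j) = j
    omega
  · intro k hk
    simp only [Finset.mem_range] at hk
    show a + b - 1 - (a + b - 1 - k) = k
    omega
  · intro j hj
    simp only [Finset.mem_Icc] at hj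
    have h1 : a + b - 1 - (a + b - 1 - j) = j := by omega
    have h2 : Nat.choose (a + b - 1) (a + b - 1 - j) = Nat.choose (a + b - 1) j :=
      Nat.choose_symm (by omega)
    rw [h1, h2]

lemma aux_tele (x q : ℝ) (hxq : x + q = 1) (m s : ℕ) (hs : s ≤ m) :
    ∑ k ∈ Finset.range (s + 1), (Nat.choose (m + 1) k : ℝ) * x ^ (m + 1 - k) * q ^ k
      = (∑ k ∈ Finset.range (s + 1), (Nat.choose m k : ℝ) * x ^ (m - k) * q ^ k)
        - (Nat.choose m s : ℝ) * x ^ (m - s) * q ^ (s + 1) := by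
  induction s with
  | zero =>
      simp only [zero_add, Finset.sum_range_one, Nat.choose_zero_right, Nat.cast_one, one_mul, pow_zero,
        mul_one, Nat.sub_zero]
      rw [pow_succ]
      linear_combination x ^ m * hxq
  | succ s ih =>
      rw [Finset.sum_range_succ, Finset.sum_range_succ (f := fun k => (Nat.choose m k : ℝ) * x ^ (m - k) * q ^ k),
        ih (by omega)]
      have e1 : m + 1 - (s + 1) = m - s := by omega
      have e2 : m - s = m - (s + 1) + 1 := by omega
      rw [e1, Nat.choose_succ_succ m s, e2]
      push_cast
      rw [pow_succ x (m - (s + 1))]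
      linear_combination ((Nat.choose m (s + 1) : ℝ) * x ^ (m - (s + 1)) * q ^ (s + 1)) * hxq

lemma aux_step (x q : ℝ) (hx : 0 < x) (hq : 0 < q) (m k : ℕ) (hk : k < m)
    (h : ((k : ℝ) + 1) * x ≤ ((m : ℝ) - k) * q) :
    (Nat.choose m k : ℝ) * x ^ (m - k) * q ^ k
      ≤ (Nat.choose m (k + 1) : ℝ) * x ^ (m - (k + 1)) * q ^ (k + 1) := by
  have hid : (Nat.choose m (k + 1) : ℝ) * ((k : ℝ) + 1) = (Nat.choose m k : ℝ) * ((m : ℝ) - k) := by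
    have h1 := Nat.choose_succ_right_eq m k
    have h2 : ((Nat.choose m (k + 1) * (k + 1) : ℕ) : ℝ) = ((Nat.choose m k * (m - k) : ℕ) : ℝ) := by
      exact_mod_cast congrArg (Nat.cast (R := ℝ)) h1
    push_cast [Nat.cast_sub hk.le] at h2
    linarith
  have hcpos : (0 : ℝ) < (Nat.choose m k : ℝ) := by
    exact_mod_cast Nat.choose_pos hk.le
  have h2 : (Nat.choose m k : ℝ) * x ≤ (Nat.choose m (k + 1) : ℝ) * q := by
    nlinarith [mul_le_mul_of_nonneg_left h hcpos.le]
  have e : m - k = m - (k + 1) + 1 := by omega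
  rw [e, pow_succ x (m - (k + 1)), pow_succ q k]
  have h4 := mul_le_mul_of_nonneg_right h2 (by positivity : (0 : ℝ) ≤ x ^ (m - (k + 1)) * q ^ k)
  linear_combination h4

lemma aux_step_lt (x q : ℝ) (hx : 0 < x) (hq : 0 < q) (m k : ℕ) (hk : k < m)
    (h : ((k : ℝ) + 1) * x < ((m : ℝ) - k) * q) :
    (Nat.choose m k : ℝ) * x ^ (m - k) * q ^ k
      < (Nat.choose m (k + 1) : ℝ) * x ^ (m - (k + 1)) * q ^ (k + 1) := by
  have hid : (Nat.choose m (k + 1) : ℝ) * ((k : ℝ) + 1) = (Nat.choose m k : ℝ) * ((m : ℝ) - k) := by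
    have h1 := Nat.choose_succ_right_eq m k
    have h2 : ((Nat.choose m (k + 1) * (k + 1) : ℕ) : ℝ) = ((Nat.choose m k * (m - k) : ℕ) : ℝ) := by
      exact_mod_cast congrArg (Nat.cast (R := ℝ)) h1
    push_cast [Nat.cast_sub hk.le] at h2
    linarith
  have hcpos : (0 : ℝ) < (Nat.choose m k : ℝ) := by
    exact_mod_cast Nat.choose_pos hk.le
  have h2 : (Nat.choose m k : ℝ) * x < (Nat.choose m (k + 1) : ℝ) * q := by
    nlinarith [mul_lt_mul_of_pos_left h hcpos]
  have e : m - k = m - (k + 1) + 1 := by omega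
  rw [e, pow_succ x (m - (k + 1)), pow_succ q k]
  have h4 := mul_lt_mul_of_pos_right h2 (by positivity : (0 : ℝ) < x ^ (m - (k + 1)) * q ^ k)
  nlinarith [h4]

lemma aux_chain (x q : ℝ) (hx : 0 < x) (hq : 0 < q) (hxq : x + q = 1)
    (r m : ℕ) (hrm : r ≤ m) (h : (r : ℝ) ≤ ((m : ℝ) + 1) * q) :
    ∀ j k, k + j = r → (Nat.choose m k : ℝ) * x ^ (m - k) * q ^ k
      ≤ (Nat.choose m r : ℝ) * x ^ (m - r) * q ^ r := by
  intro j
  induction j with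
  | zero => intro k hk; simp only [Nat.add_zero] at hk; subst hk; exact le_refl _
  | succ j ih =>
      intro k hk
      have hk1 : (k : ℝ) + 1 ≤ r := by exact_mod_cast by omega
      have hkm : k < m := by omega
      have hstep := aux_step x q hx hq m k hkm (by nlinarith)
      exact hstep.trans (ih (k + 1) (by omega))

lemma aux_G_tendsto (x q : ℝ) (hx : 0 < x) (hx1 : x < 1) (hq : 0 < q) (r : ℕ) :
    Filter.Tendsto (fun m : ℕ => ∑ k ∈ Finset.range r, (Nat.choose m k : ℝ) * x ^ (m - k) * q ^ k)
      Filter.atTop (nhds 0) := by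
  have h0 : (0 : ℝ) = ∑ k ∈ Finset.range r, (0 : ℝ) := by simp
  rw [h0]
  refine tendsto_finset_sum _ (fun k _ => ?_)
  refine squeeze_zero' (g := fun m : ℕ => (q ^ k / x ^ k) * ((m : ℝ) ^ k * x ^ m)) ?_ ?_ ?_
  · filter_upwards with m
    positivity
  · filter_upwards [Filter.eventually_ge_atTop k] with m hm
    have hC : (Nat.choose m k : ℝ) ≤ (m : ℝ) ^ k := by
      exact_mod_cast Nat.choose_le_pow m k
    have hxm : x ^ (m - k) = x ^ m / x ^ k := by
      rw [eq_div_iff (by positivity)]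
      rw [← pow_add]
      congr 1
      omega
    calc (Nat.choose m k : ℝ) * x ^ (m - k) * q ^ k
        ≤ (m : ℝ) ^ k * x ^ (m - k) * q ^ k := by
          have := mul_le_mul_of_nonneg_right hC (by positivity : (0:ℝ) ≤ x ^ (m - k) * q ^ k)
          nlinarith [this]
      _ = (q ^ k / x ^ k) * ((m : ℝ) ^ k * x ^ m) := by rw [hxm]; ring
  · have := (tendsto_pow_const_mul_const_pow_of_lt_one k hx.le hx1).const_mul (q ^ k / x ^ k)
    simpa using this

lemma aux_Gle (x q : ℝ) (hx : 0 < x) (hq : 0 < q) (hxq : x + q = 1) (r m : ℕ) (hrm : r ≤ m)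
    (h : (r : ℝ) ≤ ((m : ℝ) + 1) * q) :
    ∑ k ∈ Finset.range r, (Nat.choose m k : ℝ) * x ^ (m - k) * q ^ k
      ≤ (r : ℝ) * ((Nat.choose m r : ℝ) * x ^ (m - r) * q ^ r) := by
  calc ∑ k ∈ Finset.range r, (Nat.choose m k : ℝ) * x ^ (m - k) * q ^ k
      ≤ (Finset.range r).card • ((Nat.choose m r : ℝ) * x ^ (m - r) * q ^ r) :=
        Finset.sum_le_card_nsmul _ _ _ (fun k hk => by
          simp only [Finset.mem_range] at hk
          exact aux_chain x q hx hq hxq r m hrm h (r - k) k (by omega))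
    _ = _ := by simp [nsmul_eq_mul]

lemma aux_Glt (x q : ℝ) (hx : 0 < x) (hq : 0 < q) (hxq : x + q = 1) (r m : ℕ) (hr : 1 ≤ r)
    (hrm : r ≤ m) (h : (r : ℝ) < ((m : ℝ) + 1) * q) :
    ∑ k ∈ Finset.range r, (Nat.choose m k : ℝ) * x ^ (m - k) * q ^ k
      < (r : ℝ) * ((Nat.choose m r : ℝ) * x ^ (m - r) * q ^ r) := by
  have e5 : r = (r - 1) + 1 := by omega
  have hsplit : ∑ k ∈ Finset.range r, (Nat.choose m k : ℝ) * x ^ (m - k) * q ^ k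
      = (∑ k ∈ Finset.range (r - 1), (Nat.choose m k : ℝ) * x ^ (m - k) * q ^ k)
        + (Nat.choose m (r - 1) : ℝ) * x ^ (m - (r - 1)) * q ^ (r - 1) := by
    conv_lhs => rw [e5]
    rw [Finset.sum_range_succ]
  have hb1 : ∑ k ∈ Finset.range (r - 1), (Nat.choose m k : ℝ) * x ^ (m - k) * q ^ k
      ≤ ((r : ℝ) - 1) * ((Nat.choose m r : ℝ) * x ^ (m - r) * q ^ r) := by
    have := Finset.sum_le_card_nsmul (Finset.range (r - 1))
      (fun k => (Nat.choose m k : ℝ) * x ^ (m - k) * q ^ k)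
      ((Nat.choose m r : ℝ) * x ^ (m - r) * q ^ r)
      (fun k hk => by
        simp only [Finset.mem_range] at hk
        exact aux_chain x q hx hq hxq r m hrm h.le (r - k) k (by omega))
    simpa [nsmul_eq_mul, Nat.cast_sub hr] using this
  have hxe : x = 1 - q := by linarith
  have hcond : ((↑(r - 1) : ℝ) + 1) * x < ((m : ℝ) - ↑(r - 1)) * q := by
    push_cast [Nat.cast_sub hr]
    rw [hxe]
    nlinarith [h]
  have hb2 := aux_step_lt x q hx hq m (r - 1) (by omega) hcond
  rw [← e5] at hb2
  linarith


/-- The tail series `∑_{d=D+1}^∞ (1/(d-1)) I_{d-r',r'}(x)` (reindexed by `d = n + D + 1`)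
converges and its sum is strictly less than `I_{D-r',r'}(x)`. -/
theorem tail_sum_lt_incBeta (M : ℕ) (hM : 1 ≤ M) (η : ℝ) (hη0 : 0 < η) (hη1 : η < 1)
    (r' D : ℕ) (hr1 : 1 ≤ r') (hrM : r' ≤ M) (hD : r' + 1 ≤ D)
    (hDη : (M : ℝ) ≤ ((D : ℝ) + 1) * η)
    (x : ℝ) (hx0 : 0 < x) (hx1 : x ≤ 1 - η) :
    ∃ L : ℝ,
      HasSum (fun n : ℕ => (1 / ((n : ℝ) + (D : ℝ))) * incBeta (n + (D + 1 - r')) r' x) L ∧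
      L < incBeta (D - r') r' x := by
  set q : ℝ := 1 - x with hqdef
  have hq0 : 0 < q := by rw [hqdef]; linarith
  have hηq : η ≤ q := by rw [hqdef]; linarith
  have hx1' : x < 1 := by linarith
  have hq1 : q ≤ 1 := by rw [hqdef]; linarith
  have hxq : x + q = 1 := by rw [hqdef]; ring
  set G : ℕ → ℝ := fun m => ∑ k ∈ Finset.range r', (Nat.choose m k : ℝ) * x ^ (m - k) * q ^ k
    with hGdef
  have hGnonneg : ∀ m, 0 ≤ G m := by
    intro m
    rw [hGdef]
    exact Finset.sum_nonneg fun k _ => by positivity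
  -- rewriting incBeta in terms of G
  have hinc : ∀ n : ℕ, incBeta (n + (D + 1 - r')) r' x = G (n + D) := by
    intro n
    rw [aux_incBeta_eq _ _ hr1]
    have e : n + (D + 1 - r') + r' - 1 = n + D := by omega
    rw [e, ← hqdef, hGdef]
  have hinc2 : incBeta (D - r') r' x = G (D - 1) := by
    rw [aux_incBeta_eq _ _ hr1]
    have e : D - r' + r' - 1 = D - 1 := by omega
    rw [e, ← hqdef, hGdef]
  -- the η condition
  have hη' : ∀ m : ℕ, D ≤ m → (r' : ℝ) ≤ ((m : ℝ) + 1) * q := by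
    intro m hm
    have hc : (D : ℝ) + 1 ≤ (m : ℝ) + 1 := by exact_mod_cast by omega
    have h2 : (r' : ℝ) ≤ (M : ℝ) := by exact_mod_cast hrM
    nlinarith [mul_le_mul_of_nonneg_left hηq (by positivity : (0:ℝ) ≤ (D:ℝ) + 1),
      mul_le_mul_of_nonneg_right hc hq0.le]
  have hη'' : (r' : ℝ) < (((1 + D : ℕ) : ℝ) + 1) * q := by
    have h2 : (r' : ℝ) ≤ (M : ℝ) := by exact_mod_cast hrM
    push_cast
    nlinarith [mul_le_mul_of_nonneg_left hηq (by positivity : (0:ℝ) ≤ (D:ℝ) + 2)]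
  -- the multiplicative identity (n+D) * C(D-1+n, r'-1) = r' * C(n+D, r')
  have hid : ∀ n : ℕ, ((n : ℝ) + (D : ℝ)) * (Nat.choose (D - 1 + n) (r' - 1) : ℝ)
      = (r' : ℝ) * (Nat.choose (n + D) r' : ℝ) := by
    intro n
    have h1 := Nat.add_one_mul_choose_eq (D - 1 + n) (r' - 1)
    have e1 : D - 1 + n + 1 = n + D := by omega
    have e2 : r' - 1 + 1 = r' := by omega
    rw [e1, e2] at h1
    have h2 : ((n + D) * Nat.choose (D - 1 + n) (r' - 1) : ℕ) = (Nat.choose (n + D) r' * r' : ℕ) := h1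
    have h3 := congrArg (Nat.cast (R := ℝ)) h2
    push_cast at h3
    linarith
  -- the key bound: G (n + D) ≤ (n + D) * Δ-term
  have hGbound : ∀ n : ℕ, G (n + D) ≤ ((n : ℝ) + (D : ℝ)) *
      ((Nat.choose (D - 1 + n) (r' - 1) : ℝ) * x ^ (D - 1 + n - (r' - 1)) * q ^ r') := by
    intro n
    have e3 : D - 1 + n - (r' - 1) = n + D - r' := by omega
    rw [e3]
    have hle := aux_Gle x q hx0 hq0 hxq r' (n + D) (by omega)
      (by push_cast; push_cast at hη' ⊢; have := hη' (n + D) (by omega); push_cast at this; linarith)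
    rw [hGdef]
    refine hle.trans_eq ?_
    linear_combination (x ^ (n + D - r') * q ^ r') * (hid n).symm
  have hGbound1 : G (1 + D) < ((1 : ℝ) + (D : ℝ)) *
      ((Nat.choose (D - 1 + 1) (r' - 1) : ℝ) * x ^ (D - 1 + 1 - (r' - 1)) * q ^ r') := by
    have e3 : D - 1 + 1 - (r' - 1) = 1 + D - r' := by omega
    rw [e3]
    have hlt := aux_Glt x q hx0 hq0 hxq r' (1 + D) hr1 (by omega) hη''
    rw [hGdef]
    refine hlt.trans_eq ?_
    have h1 := hid 1
    push_cast at h1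
    linear_combination (x ^ (1 + D - r') * q ^ r') * h1.symm
  -- telescoping
  set Δ : ℕ → ℝ := fun j => G (D - 1 + j) - G (D - 1 + j + 1) with hΔdef
  have hΔval : ∀ j : ℕ, Δ j
      = (Nat.choose (D - 1 + j) (r' - 1) : ℝ) * x ^ (D - 1 + j - (r' - 1)) * q ^ r' := by
    intro j
    have e4 : r' - 1 + 1 = r' := by omega
    have ht := aux_tele x q hxq (D - 1 + j) (r' - 1) (by omega)
    rw [e4] at ht
    simp only [hΔdef, hGdef]
    linarith [ht]
  have hΔnonneg : ∀ j, 0 ≤ Δ j := by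
    intro j
    rw [hΔval j]
    positivity
  have hpartial : ∀ N : ℕ, ∑ j ∈ Finset.range N, Δ j = G (D - 1) - G (D - 1 + N) := by
    intro N
    induction N with
    | zero => simp
    | succ N ih =>
        rw [Finset.sum_range_succ, ih]
        simp only [hΔdef]
        have e : D - 1 + N + 1 = D - 1 + (N + 1) := by omega
        rw [e]
        ring
  have hΔsummable : Summable Δ :=
    summable_of_sum_range_le (c := G (D - 1)) hΔnonneg (fun N => by
      rw [hpartial N]
      have := hGnonneg (D - 1 + N)
      linarith)
  have hHtend : Filter.Tendsto (fun N : ℕ => G (D - 1 + N)) Filter.atTop (nhds 0) := by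
    have hg := aux_G_tendsto x q hx0 hx1' hq0 r'
    rw [← hGdef] at hg
    have := hg.comp (Filter.tendsto_add_atTop_nat (D - 1))
    refine this.congr (fun N => ?_)
    simp only [Function.comp_apply]
    congr 1
    omega
  have hΔtsum : ∑' j, Δ j = G (D - 1) := by
    have h1 := hΔsummable.hasSum.tendsto_sum_nat
    have h2 : Filter.Tendsto (fun N : ℕ => ∑ j ∈ Finset.range N, Δ j) Filter.atTop
        (nhds (G (D - 1) - 0)) := by
      simp only [hpartial]
      exact Filter.Tendsto.sub tendsto_const_nhds hHtend
    rw [sub_zero] at h2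
    exact tendsto_nhds_unique h1 h2
  -- the series terms
  set f : ℕ → ℝ := fun n => (1 / ((n : ℝ) + (D : ℝ))) * G (n + D) with hfdef
  have hDpos : ∀ n : ℕ, (0 : ℝ) < (n : ℝ) + (D : ℝ) := by
    intro n
    have : (1 : ℝ) ≤ (D : ℝ) := by exact_mod_cast by omega
    positivity
  have hfnonneg : ∀ n, 0 ≤ f n := by
    intro n
    simp only [hfdef]
    have h1 := hGnonneg (n + D)
    have h2 := (hDpos n).le
    positivity
  have hfle : ∀ n, f n ≤ Δ n := by
    intro n
    simp only [hfdef]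
    rw [hΔval n]
    have hb := hGbound n
    rw [one_div]
    rw [inv_mul_le_iff₀ (hDpos n)]
    calc G (n + D) ≤ _ := hb
      _ = _ := by ring
  have hf1 : f 1 < Δ 1 := by
    simp only [hfdef]
    rw [hΔval 1]
    have hb := hGbound1
    rw [one_div]
    rw [inv_mul_lt_iff₀ (hDpos 1)]
    push_cast
    push_cast at hb
    calc G (1 + D) < _ := hb
      _ = _ := by ring
  have hfsummable : Summable f := hΔsummable.of_nonneg_of_le hfnonneg hfle
  refine ⟨∑' n, f n, ?_, ?_⟩
  · have hfun : (fun n : ℕ => (1 / ((n : ℝ) + (D : ℝ))) * incBeta (n + (D + 1 - r')) r' x) = f := by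
      funext n
      simp only [hfdef]
      rw [hinc n]
    rw [hfun]
    exact hfsummable.hasSum
  · rw [hinc2, ← hΔtsum]
    exact Summable.tsum_lt_tsum_of_nonneg hfnonneg hfle hf1 hΔsummable
end

section
/- Let θ > 0 and q > 1 be reals, and M ≥ 1, D ≥ 2 integers. For integers d ≥ 1 and r set α_{d,r} = (1 − q^{−d+r})/(1 − q^{−d}) and ᾱ_{d,r} = 1 − α_{d,r}. Let reals ρ_{d,r} be given for all pairs with 1 ≤ r ≤ M and r ≤ d ≤ D, and set ρ_{d,r} = 0 for r = M+1. Define ρ̂^{(0)}_{d,r} = ρ_{d,r} and ρ̂^{(i+1)}_{d,r} = α_{d−i,r}·ρ̂^{(i)}_{d,r} + ᾱ_{d−i,r+1}·ρ̂^{(i)}_{d,r+1}. For 1 ≤ r ≤ M+1, r ≤ d ≤ D, and τ ∈ [0, θ) define ρ_{d,r}(τ) = (1 − τ/θ)^d · ∑_{j=d}^{D} C(j−1, d−1)·(τ/θ)^{j−d}·ρ̂^{(j−d)}_{j,r}, and set ρ_{D+1,r}(τ) = 0. Then ρ_{d,r}(0) = ρ_{d,r}, and for every pair (d, r) with 1 ≤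 r ≤ M and r < d ≤ D, the function ρ_{d,r} is differentiable on [0, θ) with ρ_{d,r}′(τ) = (α_{d+1,r}·ρ_{d+1,r}(τ) + ᾱ_{d+1,r+1}·ρ_{d+1,r+1}(τ) − ρ_{d,r}(τ)) · d/(θ − τ). -/
/-- `α_{d,r} = (1 - q^{-d+r})/(1 - q^{-d})`. -/
noncomputable def alphaC (q : ℝ) (d r : ℕ) : ℝ :=
  (1 - q ^ (-(d : ℤ) + (r : ℤ))) / (1 - q ^ (-(d : ℤ)))

/-- `ρ̂^{(0)}_{d,r} = ρ_{d,r}` and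
`ρ̂^{(i+1)}_{d,r} = α_{d-i,r} ρ̂^{(i)}_{d,r} + (1 - α_{d-i,r+1}) ρ̂^{(i)}_{d,r+1}`. -/
noncomputable def rhoHat (q : ℝ) (ρ : ℕ → ℕ → ℝ) : ℕ → ℕ → ℕ → ℝ
  | 0, d, r => ρ d r
  | i + 1, d, r =>
      alphaC q (d - i) r * rhoHat q ρ i d r +
        (1 - alphaC q (d - i) (r + 1)) * rhoHat q ρ i d (r + 1)

/-- `ρ_{d,r}(τ) = (1 - τ/θ)^d ∑_{j=d}^D C(j-1, d-1) (τ/θ)^{j-d} ρ̂^{(j-d)}_{j,r}`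
(note that this gives `ρ_{D+1,r}(τ) = 0`, as the sum is empty). -/
noncomputable def rhoFun (θ q : ℝ) (D : ℕ) (ρ : ℕ → ℕ → ℝ) (d r : ℕ) (τ : ℝ) : ℝ :=
  (1 - τ / θ) ^ d * ∑ j ∈ Finset.Icc d D,
    (Nat.choose (j - 1) (d - 1) : ℝ) * (τ / θ) ^ (j - d) * rhoHat q ρ (j - d) j r

/-- The key combinatorial/recursive identity: the termwise derivative of the sum in
`rhoFun` at level `d` equals `d` times the corresponding combination of level-`d+1` sums. -/
lemma key_sum (q x : ℝ) (ρ : ℕ → ℕ → ℝ) (D d r : ℕ) (hd : 1 ≤ d) :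
    ∑ j ∈ Finset.Icc d D, (Nat.choose (j - 1) (d - 1) : ℝ) *
        (((j - d : ℕ) : ℝ) * x ^ (j - d - 1)) * rhoHat q ρ (j - d) j r
    = (d : ℝ) * (alphaC q (d + 1) r *
        ∑ j ∈ Finset.Icc (d + 1) D, (Nat.choose (j - 1) (d + 1 - 1) : ℝ) *
          x ^ (j - (d + 1)) * rhoHat q ρ (j - (d + 1)) j r
      + (1 - alphaC q (d + 1) (r + 1)) *
        ∑ j ∈ Finset.Icc (d + 1) D, (Nat.choose (j - 1) (d + 1 - 1) : ℝ) *
          x ^ (j - (d + 1)) * rhoHat q ρ (j - (d + 1)) j (r + 1)) := by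
  rw [← Finset.sum_subset (Finset.Icc_subset_Icc_left (Nat.le_succ d))
    (fun j hj hj' => by
      simp only [Finset.mem_Icc] at hj hj'
      have : j = d := by omega
      subst this
      simp)]
  rw [Finset.mul_sum, Finset.mul_sum, ← Finset.sum_add_distrib, Finset.mul_sum]
  refine Finset.sum_congr rfl fun j hj => ?_
  simp only [Finset.mem_Icc] at hj
  have hrho : ∀ r', rhoHat q ρ (j - d) j r' =
      alphaC q (d + 1) r' * rhoHat q ρ (j - d - 1) j r' +
      (1 - alphaC q (d + 1) (r' + 1)) * rhoHat q ρ (j - d - 1) j (r' + 1) := by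
    intro r'
    obtain ⟨k, hk⟩ : ∃ k, j - d = k + 1 := ⟨j - d - 1, by omega⟩
    have hjk : j - k = d + 1 := by omega
    rw [hk, Nat.add_sub_cancel]
    simp only [rhoHat]
    rw [hjk]
  have hc : ((j - 1).choose (d - 1) : ℝ) * ((j - d : ℕ) : ℝ)
      = (d : ℝ) * ((j - 1).choose d : ℝ) := by
    have h1 : (j - 1).choose d * d = (j - 1).choose (d - 1) * (j - d) := by
      have := Nat.choose_succ_right_eq (j - 1) (d - 1)
      rw [show d - 1 + 1 = d by omega, show j - 1 - (d - 1) = j - d by omega] at this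
      exact this
    exact_mod_cast by push_cast [← h1]; ring
  rw [hrho]
  have : j - (d + 1) = j - d - 1 := by omega
  rw [this, show d + 1 - 1 = d from rfl]
  linear_combination (x ^ (j - d - 1) * (alphaC q (d + 1) r * rhoHat q ρ (j - d - 1) j r +
      (1 - alphaC q (d + 1) (r + 1)) * rhoHat q ρ (j - d - 1) j (r + 1))) * hc

/-- The explicit solution of the density-evolution system of differential equations:
`ρ_{d,r}(0) = ρ_{d,r}` and, for `1 ≤ r ≤ M`, `r < d ≤ D` and `τ ∈ [0, θ)`,
`ρ_{d,r}'(τ) = (α_{d+1,r} ρ_{d+1,r}(τ) + (1 - α_{d+1,r+1}) ρ_{d+1,r+1}(τ) - ρ_{d,r}(τ)) · d/(θ - τ)`. -/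
theorem density_evolution_solution (θ q : ℝ) (hθ : 0 < θ) (hq : 1 < q)
    (M D : ℕ) (hM : 1 ≤ M) (hD : 2 ≤ D)
    (ρ : ℕ → ℕ → ℝ) (hρ0 : ∀ d r, M + 1 ≤ r → ρ d r = 0) :
    (∀ d r, 1 ≤ r → r ≤ M → r ≤ d → d ≤ D → rhoFun θ q D ρ d r 0 = ρ d r) ∧
    (∀ d r, 1 ≤ r → r ≤ M → r < d → d ≤ D → ∀ τ ∈ Set.Ico (0:ℝ) θ,
      HasDerivAt (fun t => rhoFun θ q D ρ d r t)
        ((alphaC q (d + 1) r * rhoFun θ q D ρ (d + 1) r τ +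
            (1 - alphaC q (d + 1) (r + 1)) * rhoFun θ q D ρ (d + 1) (r + 1) τ -
            rhoFun θ q D ρ d r τ) * (d : ℝ) / (θ - τ)) τ) := by
  have hθ' : θ ≠ 0 := ne_of_gt hθ
  constructor
  · intro d r hr hrM hrd hdD
    unfold rhoFun
    rw [zero_div, Finset.sum_eq_single d]
    · simp [rhoHat]
    · intro j hj hne
      simp only [Finset.mem_Icc] at hj
      rw [zero_pow (by omega : j - d ≠ 0)]
      ring
    · intro h
      exact absurd (Finset.mem_Icc.mpr ⟨le_refl d, hdD⟩) h
  · intro d r hr hrM hrd hdD τ hτ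
    obtain ⟨hτ0, hτθ⟩ := hτ
    have hne : θ - τ ≠ 0 := ne_of_gt (by linarith : (0:ℝ) < θ - τ)
    have h1x : (0:ℝ) < 1 - τ / θ := by
      have : τ / θ < 1 := (div_lt_one hθ).mpr hτθ
      linarith
    have hd1 : 1 ≤ d := by omega
    have hpow : HasDerivAt (fun t : ℝ => (1 - t / θ) ^ d)
        ((d : ℝ) * (1 - τ / θ) ^ (d - 1) * (-(1 / θ))) τ :=
      (((hasDerivAt_id τ).div_const θ).const_sub 1).pow d
    have hsum : HasDerivAt
        (fun t : ℝ => ∑ j ∈ Finset.Icc d D,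
          (Nat.choose (j - 1) (d - 1) : ℝ) * (t / θ) ^ (j - d) * rhoHat q ρ (j - d) j r)
        (∑ j ∈ Finset.Icc d D,
          ((Nat.choose (j - 1) (d - 1) : ℝ) *
            (((j - d : ℕ) : ℝ) * (τ / θ) ^ (j - d - 1) * (1 / θ))) * rhoHat q ρ (j - d) j r) τ :=
      HasDerivAt.fun_sum fun j _ =>
        ((((hasDerivAt_id τ).div_const θ).pow (j - d)).const_mul _).mul_const _
    have htot := hpow.mul hsum
    have heq :
        (d : ℝ) * (1 - τ / θ) ^ (d - 1) * (-(1 / θ)) *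
            (∑ j ∈ Finset.Icc d D, (Nat.choose (j - 1) (d - 1) : ℝ) * (τ / θ) ^ (j - d) *
              rhoHat q ρ (j - d) j r) +
          (1 - τ / θ) ^ d * (∑ j ∈ Finset.Icc d D,
            ((Nat.choose (j - 1) (d - 1) : ℝ) *
              (((j - d : ℕ) : ℝ) * (τ / θ) ^ (j - d - 1) * (1 / θ))) * rhoHat q ρ (j - d) j r)
        = (alphaC q (d + 1) r * rhoFun θ q D ρ (d + 1) r τ +
            (1 - alphaC q (d + 1) (r + 1)) * rhoFun θ q D ρ (d + 1) (r + 1) τ -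
            rhoFun θ q D ρ d r τ) * (d : ℝ) / (θ - τ) := by
      have hS2 : (∑ j ∈ Finset.Icc d D,
            ((Nat.choose (j - 1) (d - 1) : ℝ) *
              (((j - d : ℕ) : ℝ) * (τ / θ) ^ (j - d - 1) * (1 / θ))) * rhoHat q ρ (j - d) j r)
          = (1 / θ) * ∑ j ∈ Finset.Icc d D, (Nat.choose (j - 1) (d - 1) : ℝ) *
              (((j - d : ℕ) : ℝ) * (τ / θ) ^ (j - d - 1)) * rhoHat q ρ (j - d) j r := by
        rw [Finset.mul_sum]
        exact Finset.sum_congr rfl fun j _ => by ring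
      rw [hS2, key_sum q (τ / θ) ρ D d r hd1]
      unfold rhoFun
      have e1 : (1 - τ / θ) ^ d = (1 - τ / θ) ^ (d - 1) * (1 - τ / θ) := by
        conv_lhs => rw [show d = (d - 1) + 1 by omega]
        rw [pow_succ]
      have e2 : θ - τ = θ * (1 - τ / θ) := by field_simp
      rw [eq_div_iff hne, e2, pow_succ, e1]
      field_simp
      ring
    rw [← heq]
    unfold rhoFun
    exact htot
end
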